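/- arXiv:1011.5491 — 6 statements merged into one kernel-verified Lean document; each statement's English description precedes it below -/
import Mathlib

section
/- A permutation π ∈ S_n is separable (i.e., avoids both patterns 3142 and 2413) if and only if its inversion poset P(π) contains no induced subposet isomorphic to the four-element poset N with elements {a, b, c, d} whose only order relations are b < x, b < a, y < a (i.e., the poset whose Hasse diagram is the letter N: two minimal elements b, y and two maximal elements x, a, with b below both x and a, and y below only a). -/
/-- A weakly increasing subsequence of the word `w`, given as a set of positions. -/
def WkInc (w : List ℕ) (S : Finset (Fin w.length)) : Prop :=
  ∀ p ∈ S, ∀ q ∈ S, p < q → w.get p ≤ w.get q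

/-- The maximum total number of elements in a union of `d` pairwise disjoint weakly
increasing subsequences of `w`; by Greene's theorem this equals `μ₁ + ⋯ + μ_d` where
`μ = shape(w)` is the RSK shape of `w`. -/
noncomputable def greene (w : List ℕ) (d : ℕ) : ℕ :=
  sSup {N | ∃ S : Fin d → Finset (Fin w.length),
    (∀ i, WkInc w (S i)) ∧ (∀ i j, i ≠ j → Disjoint (S i) (S j)) ∧
    N = ∑ i, (S i).card}

/-- The `(k+1)`-st part (0-indexed `k`-th part) of the RSK shape of `w`. -/
noncomputable def shapePart (w : List ℕ) (k : ℕ) : ℕ := greene w (k + 1) - greene w k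

/-- The word `w` contains the permutation `π` as a pattern. -/
def ContainsPattern {m : ℕ} (π : Equiv.Perm (Fin m)) (w : List ℕ) : Prop :=
  ∃ f : Fin m → Fin w.length, StrictMono f ∧
    ∀ j k : Fin m,
      (w.get (f j) < w.get (f k) ↔ π j < π k) ∧
      (w.get (f k) < w.get (f j) ↔ π k < π j)

/-- The pattern 3142 (one-line notation), 0-indexed. -/
def p3142 : Equiv.Perm (Fin 4) := ⟨![2,0,3,1], ![1,3,0,2], by decide, by decide⟩

/-- The pattern 2413 (one-line notation), 0-indexed. -/
def p2413 : Equiv.Perm (Fin 4) := ⟨![1,3,0,2], ![2,0,3,1], by decide, by decide⟩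

/-- The one-line word of a permutation of `[n] = {1,…,n}`. -/
def permWord {n : ℕ} (σ : Equiv.Perm (Fin n)) : List ℕ :=
  List.ofFn fun i => (σ i : ℕ) + 1

/-- A permutation is separable iff it avoids both 3142 and 2413. -/
def Separable {n : ℕ} (σ : Equiv.Perm (Fin n)) : Prop :=
  ¬ ContainsPattern p3142 (permWord σ) ∧ ¬ ContainsPattern p2413 (permWord σ)

/-- A (strictly) increasing subsequence of the permutation `σ`, as a set of positions. -/
def IncSubseq {n : ℕ} (σ : Equiv.Perm (Fin n)) (S : Finset (Fin n)) : Prop :=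
  ∀ p ∈ S, ∀ q ∈ S, p < q → σ p < σ q

/-- The strict order of the inversion poset of `σ`: `(p, σ p) ≺ (q, σ q)` iff
`p < q` and `σ p < σ q`. -/
def invPrec {n : ℕ} (σ : Equiv.Perm (Fin n)) (p q : Fin n) : Prop :=
  p < q ∧ σ p < σ q

/- Auxiliary lemmas -/

lemma permWord_length {n : ℕ} (σ : Equiv.Perm (Fin n)) : (permWord σ).length = n :=
  List.length_ofFn

lemma permWord_get {n : ℕ} (σ : Equiv.Perm (Fin n)) (p : Fin (permWord σ).length) :
    (permWord σ).get p = (σ (Fin.cast (permWord_length σ) p) : ℕ) + 1 := by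
  rw [List.get_eq_getElem]; simp only [permWord, List.getElem_ofFn]; rfl

/-- Generic construction of a pattern occurrence inside a `permWord`. -/
lemma contains_aux {n : ℕ} (σ : Equiv.Perm (Fin n)) (π : Equiv.Perm (Fin 4))
    (i : Fin 4 → Fin n) (hmono : ∀ j k : Fin 4, j < k → i j < i k)
    (hval : ∀ j k : Fin 4, π j < π k → σ (i j) < σ (i k)) :
    ContainsPattern π (permWord σ) := by
  have hlen := permWord_length σ
  refine ⟨fun j => Fin.cast hlen.symm (i j), ?_, ?_⟩
  · intro j k hjk
    exact hmono j k hjk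
  · have key : ∀ j k : Fin 4, σ (i j) < σ (i k) ↔ π j < π k := by
      intro j k
      constructor
      · intro h
        rcases lt_trichotomy (π j) (π k) with h' | h' | h'
        · exact h'
        · exfalso
          have hjk : j = k := π.injective h'
          rw [hjk] at h
          exact lt_irrefl _ h
        · exact absurd (hval k j h') (fun h2 => lt_asymm h h2)
      · exact hval j k
    have hg : ∀ j : Fin 4, (permWord σ).get (Fin.cast hlen.symm (i j)) = (σ (i j) : ℕ) + 1 := by
      intro j
      rw [permWord_get]
      rfl
    intro j k
    constructor
    · rw [hg, hg, ← key j k, Fin.lt_def]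
      omega
    · rw [hg, hg, ← key k j, Fin.lt_def]
      omega

lemma mono4 {n : ℕ} (q0 q1 q2 q3 : Fin n) (h1 : q0 < q1) (h2 : q1 < q2) (h3 : q2 < q3) :
    ∀ j k : Fin 4, j < k → ![q0,q1,q2,q3] j < ![q0,q1,q2,q3] k := by
  intro j k hjk
  fin_cases j <;> fin_cases k <;>
    first
      | exact absurd hjk (by decide)
      | assumption
      | exact h1.trans h2
      | exact h2.trans h3
      | exact (h1.trans h2).trans h3

lemma val3142 {n : ℕ} (σ : Equiv.Perm (Fin n)) (q0 q1 q2 q3 : Fin n)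
    (h1 : σ q1 < σ q3) (h2 : σ q3 < σ q0) (h3 : σ q0 < σ q2) :
    ∀ j k : Fin 4, p3142 j < p3142 k → σ (![q0,q1,q2,q3] j) < σ (![q0,q1,q2,q3] k) := by
  intro j k hjk
  fin_cases j <;> fin_cases k <;>
    first
      | exact absurd hjk (by decide)
      | assumption
      | exact h1.trans h2
      | exact h2.trans h3
      | exact (h1.trans h2).trans h3

lemma val2413 {n : ℕ} (σ : Equiv.Perm (Fin n)) (q0 q1 q2 q3 : Fin n)
    (h1 : σ q2 < σ q0) (h2 : σ q0 < σ q3) (h3 : σ q3 < σ q1) :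
    ∀ j k : Fin 4, p2413 j < p2413 k → σ (![q0,q1,q2,q3] j) < σ (![q0,q1,q2,q3] k) := by
  intro j k hjk
  fin_cases j <;> fin_cases k <;>
    first
      | exact absurd hjk (by decide)
      | assumption
      | exact h1.trans h2
      | exact h2.trans h3
      | exact (h1.trans h2).trans h3

/-- From an N-configuration, extract a 3142 or 2413 pattern. -/
lemma pattern_of_N {n : ℕ} (σ : Equiv.Perm (Fin n))
    (hN : ∃ x a b y : Fin n,
        invPrec σ b x ∧ invPrec σ b a ∧ invPrec σ y a ∧
        ¬ invPrec σ x a ∧ ¬ invPrec σ a x ∧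
        ¬ invPrec σ b y ∧ ¬ invPrec σ y b ∧
        ¬ invPrec σ x y ∧ ¬ invPrec σ y x) :
    ContainsPattern p3142 (permWord σ) ∨ ContainsPattern p2413 (permWord σ) := by
  obtain ⟨x, a, b, y, hbx, hba, hya, hxa, hax, hby, hyb, hxy, hyx⟩ := hN
  have val_gt : ∀ p q : Fin n, p < q → ¬ invPrec σ p q → σ q < σ p := by
    intro p q hpq h
    rcases lt_trichotomy (σ p) (σ q) with h1 | h1 | h1
    · exact absurd ⟨hpq, h1⟩ h
    · exact absurd (σ.injective h1) (Fin.ne_of_lt hpq)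
    · exact h1
  have hxa' : x ≠ a := fun h => hyx (h ▸ hya)
  have hby' : b ≠ y := fun h => hyx (h ▸ hbx)
  have hxy' : x ≠ y := fun h => hxa (h ▸ hya)
  rcases lt_trichotomy y b with hc1 | hc1 | hc1
  · -- y < b
    have v1 : σ b < σ y := val_gt y b hc1 hyb
    rcases lt_trichotomy x a with hc2 | hc2 | hc2
    · -- x < a
      have v2 : σ a < σ x := val_gt x a hc2 hxa
      rcases lt_trichotomy x y with hc3 | hc3 | hc3
      · exact absurd (lt_trans (lt_trans hc3 hc1) hbx.1) (lt_irrefl x)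
      · exact absurd hc3 hxy'
      · have v3 : σ x < σ y := val_gt y x hc3 hyx
        exact absurd (lt_trans v2 (lt_trans v3 hya.2)) (lt_irrefl _)
    · exact absurd hc2 hxa'
    · -- a < x
      have v2 : σ x < σ a := val_gt a x hc2 hax
      rcases lt_trichotomy x y with hc3 | hc3 | hc3
      · exact absurd (lt_trans hbx.1 (lt_trans hc3 hc1)) (lt_irrefl b)
      · exact absurd hc3 hxy'
      · -- positions y < b < a < x, values σ b < σ x < σ y < σ a : pattern 3142
        have v3 : σ x < σ y := val_gt y x hc3 hyx
        exact Or.inl (contains_aux σ p3142 ![y, b, a, x]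
          (mono4 y b a x hc1 hba.1 hc2)
          (val3142 σ y b a x hbx.2 v3 hya.2))
  · exact absurd hc1.symm hby'
  · -- b < y
    have v1 : σ y < σ b := val_gt b y hc1 hby
    rcases lt_trichotomy x a with hc2 | hc2 | hc2
    · -- x < a
      have v2 : σ a < σ x := val_gt x a hc2 hxa
      rcases lt_trichotomy x y with hc3 | hc3 | hc3
      · -- positions b < x < y < a, values σ y < σ b < σ a < σ x : pattern 2413
        exact Or.inr (contains_aux σ p2413 ![b, x, y, a]
          (mono4 b x y a hbx.1 hc3 hya.1)
          (val2413 σ b x y a v1 hba.2 v2))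
      · exact absurd hc3 hxy'
      · have v3 : σ x < σ y := val_gt y x hc3 hyx
        exact absurd (lt_trans hbx.2 (lt_trans v3 v1)) (lt_irrefl _)
    · exact absurd hc2 hxa'
    · -- a < x
      have v2 : σ x < σ a := val_gt a x hc2 hax
      rcases lt_trichotomy x y with hc3 | hc3 | hc3
      · exact absurd (lt_trans hc2 (lt_trans hc3 hya.1)) (lt_irrefl a)
      · exact absurd hc3 hxy'
      · have v3 : σ x < σ y := val_gt y x hc3 hyx
        exact absurd (lt_trans hbx.2 (lt_trans v3 v1)) (lt_irrefl _)

/-- From a pattern occurrence, extract positions/values as `Fin n` facts. -/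
lemma extract_pattern {n : ℕ} (σ : Equiv.Perm (Fin n)) (π : Equiv.Perm (Fin 4))
    (h : ContainsPattern π (permWord σ)) :
    ∃ i : Fin 4 → Fin n, (∀ j k : Fin 4, j < k → i j < i k) ∧
      (∀ j k : Fin 4, σ (i j) < σ (i k) ↔ π j < π k) := by
  obtain ⟨f, hmono, hval⟩ := h
  refine ⟨fun j => Fin.cast (permWord_length σ) (f j), ?_, ?_⟩
  · intro j k hjk
    exact hmono hjk
  · intro j k
    have h1 := (hval j k).1
    rw [permWord_get σ (f j), permWord_get σ (f k)] at h1
    show σ (Fin.cast (permWord_length σ) (f j)) < σ (Fin.cast (permWord_length σ) (f k)) ↔ _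
    rw [← h1, Fin.lt_def]
    omega

lemma N_of_3142 {n : ℕ} (σ : Equiv.Perm (Fin n))
    (h : ContainsPattern p3142 (permWord σ)) :
    ∃ x a b y : Fin n,
        invPrec σ b x ∧ invPrec σ b a ∧ invPrec σ y a ∧
        ¬ invPrec σ x a ∧ ¬ invPrec σ a x ∧
        ¬ invPrec σ b y ∧ ¬ invPrec σ y b ∧
        ¬ invPrec σ x y ∧ ¬ invPrec σ y x := by
  obtain ⟨i, hmono, hval⟩ := extract_pattern σ p3142 h
  have v13 : σ (i 1) < σ (i 3) := (hval 1 3).2 (by decide)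
  have v30 : σ (i 3) < σ (i 0) := (hval 3 0).2 (by decide)
  have v02 : σ (i 0) < σ (i 2) := (hval 0 2).2 (by decide)
  have h01 : i 0 < i 1 := hmono 0 1 (by decide)
  have h12 : i 1 < i 2 := hmono 1 2 (by decide)
  have h23 : i 2 < i 3 := hmono 2 3 (by decide)
  refine ⟨i 3, i 2, i 1, i 0, ?_, ?_, ?_, ?_, ?_, ?_, ?_, ?_, ?_⟩ <;>
    simp only [invPrec, Fin.lt_def, not_and, not_lt]
      at v13 v30 v02 h01 h12 h23 ⊢ <;> omega

lemma N_of_2413 {n : ℕ} (σ : Equiv.Perm (Fin n))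
    (h : ContainsPattern p2413 (permWord σ)) :
    ∃ x a b y : Fin n,
        invPrec σ b x ∧ invPrec σ b a ∧ invPrec σ y a ∧
        ¬ invPrec σ x a ∧ ¬ invPrec σ a x ∧
        ¬ invPrec σ b y ∧ ¬ invPrec σ y b ∧
        ¬ invPrec σ x y ∧ ¬ invPrec σ y x := by
  obtain ⟨i, hmono, hval⟩ := extract_pattern σ p2413 h
  have v20 : σ (i 2) < σ (i 0) := (hval 2 0).2 (by decide)
  have v03 : σ (i 0) < σ (i 3) := (hval 0 3).2 (by decide)
  have v31 : σ (i 3) < σ (i 1) := (hval 3 1).2 (by decide)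
  have h01 : i 0 < i 1 := hmono 0 1 (by decide)
  have h12 : i 1 < i 2 := hmono 1 2 (by decide)
  have h23 : i 2 < i 3 := hmono 2 3 (by decide)
  refine ⟨i 1, i 3, i 0, i 2, ?_, ?_, ?_, ?_, ?_, ?_, ?_, ?_, ?_⟩ <;>
    simp only [invPrec, Fin.lt_def, not_and, not_lt]
      at v20 v03 v31 h01 h12 h23 ⊢ <;> omega

/-- A permutation is separable iff its inversion poset has no induced subposet
isomorphic to the poset `N` with elements `{x, a, b, y}` whose only strict
relations are `b ≺ x`, `b ≺ a`, `y ≺ a`. -/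
theorem separable_iff_no_N_subposet {n : ℕ} (σ : Equiv.Perm (Fin n)) :
    Separable σ ↔
      ¬ ∃ x a b y : Fin n,
        invPrec σ b x ∧ invPrec σ b a ∧ invPrec σ y a ∧
        ¬ invPrec σ x a ∧ ¬ invPrec σ a x ∧
        ¬ invPrec σ b y ∧ ¬ invPrec σ y b ∧
        ¬ invPrec σ x y ∧ ¬ invPrec σ y x := by
  constructor
  · rintro ⟨h1, h2⟩ hN
    rcases pattern_of_N σ hN with hc | hc
    · exact h1 hc
    · exact h2 hc
  · intro hN
    exact ⟨fun hc => hN (N_of_3142 σ hc), fun hc => hN (N_of_2413 σ hc)⟩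
end

section
/- Let σ be a separable permutation and let u, w, w′ be increasing subsequences of σ with w and w′ disjoint. Then there exist two disjoint increasing subsequences α and β of σ such that α ∪ β = w ∪ w′ (as sets of positions/entries) and α ∩ u = ∅. -/
/-- Arithmetic core: four points of an induced `P4` (path `a-b-c-d` of incomparabilities,
with all other pairs comparable) must form a 2413 or 3142 configuration, in one of four
labelled ways. -/
lemma p4_cases (pa pb pc pd va vb vc vd : ℕ)
    (hab : (pa<pb ∧ vb<va) ∨ (pb<pa ∧ va<vb))
    (hbc : (pb<pc ∧ vc<vb) ∨ (pc<pb ∧ vb<vc))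
    (hcd : (pc<pd ∧ vd<vc) ∨ (pd<pc ∧ vc<vd))
    (hac : (pa<pc ∧ va<vc) ∨ (pc<pa ∧ vc<va))
    (hbd : (pb<pd ∧ vb<vd) ∨ (pd<pb ∧ vd<vb))
    (had : (pa<pd ∧ va<vd) ∨ (pd<pa ∧ vd<va)) :
    (pa<pc ∧ pc<pb ∧ pb<pd ∧ vb<va ∧ va<vd ∧ vd<vc) ∨
    (pd<pb ∧ pb<pc ∧ pc<pa ∧ vc<vd ∧ vd<va ∧ va<vb) ∨
    (pb<pa ∧ pa<pd ∧ pd<pc ∧ va<vc ∧ vc<vb ∧ vb<vd) ∨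
    (pc<pd ∧ pd<pa ∧ pa<pb ∧ vd<vb ∧ vb<vc ∧ vc<va) := by
  rcases hab with ⟨h1,h2⟩|⟨h1,h2⟩ <;> rcases hbc with ⟨h3,h4⟩|⟨h3,h4⟩ <;>
    rcases hcd with ⟨h5,h6⟩|⟨h5,h6⟩ <;> rcases hac with ⟨h7,h8⟩|⟨h7,h8⟩ <;>
    rcases hbd with ⟨h9,h10⟩|⟨h9,h10⟩ <;> rcases had with ⟨h11,h12⟩|⟨h11,h12⟩ <;> omega

lemma embed2413 {n : ℕ} (σ : Equiv.Perm (Fin n)) (q1 q2 q3 q4 : Fin n)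
    (h12 : (q1:ℕ) < q2) (h23 : (q2:ℕ) < q3) (h34 : (q3:ℕ) < q4)
    (v31 : (σ q3 : ℕ) < σ q1) (v14 : (σ q1 : ℕ) < σ q4) (v42 : (σ q4 : ℕ) < σ q2) :
    ContainsPattern p2413 (permWord σ) := by
  have hlen : (permWord σ).length = n := by simp [permWord]
  have hget : ∀ i : Fin n, (permWord σ).get (Fin.cast hlen.symm i) = (σ i : ℕ) + 1 := by
    intro i; simp [permWord, List.get_ofFn]; rfl
  have m0 : ![q1,q2,q3,q4] (⟨0, by omega⟩ : Fin 4) = q1 := rfl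
  have m1 : ![q1,q2,q3,q4] (⟨1, by omega⟩ : Fin 4) = q2 := rfl
  have m2 : ![q1,q2,q3,q4] (⟨2, by omega⟩ : Fin 4) = q3 := rfl
  have m3 : ![q1,q2,q3,q4] (⟨3, by omega⟩ : Fin 4) = q4 := rfl
  refine ⟨fun j => Fin.cast hlen.symm (![q1,q2,q3,q4] j), ?_, ?_⟩
  · intro j k hjk
    rw [Fin.lt_def] at hjk ⊢
    simp only [Fin.coe_cast]
    fin_cases j <;> fin_cases k <;> simp only [m0, m1, m2, m3] <;>
      first
        | omega
        | exact absurd hjk (by decide)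
  · intro j k
    fin_cases j <;> fin_cases k <;> simp only [hget, m0, m1, m2, m3] <;>
      refine ⟨⟨?_, ?_⟩, ?_, ?_⟩ <;>
      first
        | (intro h; decide)
        | (intro h; exact absurd h (by decide))
        | (intro h; omega)

lemma embed3142 {n : ℕ} (σ : Equiv.Perm (Fin n)) (q1 q2 q3 q4 : Fin n)
    (h12 : (q1:ℕ) < q2) (h23 : (q2:ℕ) < q3) (h34 : (q3:ℕ) < q4)
    (v24 : (σ q2 : ℕ) < σ q4) (v41 : (σ q4 : ℕ) < σ q1) (v13 : (σ q1 : ℕ) < σ q3) :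
    ContainsPattern p3142 (permWord σ) := by
  have hlen : (permWord σ).length = n := by simp [permWord]
  have hget : ∀ i : Fin n, (permWord σ).get (Fin.cast hlen.symm i) = (σ i : ℕ) + 1 := by
    intro i; simp [permWord, List.get_ofFn]; rfl
  have m0 : ![q1,q2,q3,q4] (⟨0, by omega⟩ : Fin 4) = q1 := rfl
  have m1 : ![q1,q2,q3,q4] (⟨1, by omega⟩ : Fin 4) = q2 := rfl
  have m2 : ![q1,q2,q3,q4] (⟨2, by omega⟩ : Fin 4) = q3 := rfl
  have m3 : ![q1,q2,q3,q4] (⟨3, by omega⟩ : Fin 4) = q4 := rfl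
  refine ⟨fun j => Fin.cast hlen.symm (![q1,q2,q3,q4] j), ?_, ?_⟩
  · intro j k hjk
    rw [Fin.lt_def] at hjk ⊢
    simp only [Fin.coe_cast]
    fin_cases j <;> fin_cases k <;> simp only [m0, m1, m2, m3] <;>
      first
        | omega
        | exact absurd hjk (by decide)
  · intro j k
    fin_cases j <;> fin_cases k <;> simp only [hget, m0, m1, m2, m3] <;>
      refine ⟨⟨?_, ?_⟩, ?_, ?_⟩ <;>
      first
        | (intro h; decide)
        | (intro h; exact absurd h (by decide))
        | (intro h; omega)

/-- Lemma: if `u`, `w`, `w'` are increasing subsequences of a separable permutation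
`σ` with `w` and `w'` disjoint, then `w ∪ w'` can be redecomposed into two disjoint
increasing subsequences `α` and `β` with `α ∩ u = ∅`. -/
theorem exists_redecomposition_avoiding {n : ℕ} (σ : Equiv.Perm (Fin n))
    (hsep : Separable σ) (u w w' : Finset (Fin n))
    (hu : IncSubseq σ u) (hw : IncSubseq σ w) (hw' : IncSubseq σ w')
    (hdisj : Disjoint w w') :
    ∃ α β : Finset (Fin n), IncSubseq σ α ∧ IncSubseq σ β ∧
      Disjoint α β ∧ α ∪ β = w ∪ w' ∧ α ∩ u = ∅ := by
  classical
  set T : Finset (Fin n) := w ∪ w' with hT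
  -- the incomparability ("inversion") relation on T
  set A : Fin n → Fin n → Prop := fun x y => x ∈ T ∧ y ∈ T ∧
    ((x < y ∧ σ y < σ x) ∨ (y < x ∧ σ x < σ y)) with hA
  have hAsymm : ∀ x y, A x y → A y x := by
    rintro x y ⟨hx, hy, h | h⟩
    · exact ⟨hy, hx, Or.inr h⟩
    · exact ⟨hy, hx, Or.inl h⟩
  have noInv : ∀ (s : Finset (Fin n)), IncSubseq σ s → ∀ x ∈ s, ∀ y ∈ s,
      ¬ ((x < y ∧ σ y < σ x) ∨ (y < x ∧ σ x < σ y)) := by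
    intro s hs x hx y hy h
    rcases h with ⟨h1, h2⟩ | ⟨h1, h2⟩
    · exact absurd (hs x hx y hy h1) (asymm h2)
    · exact absurd (hs y hy x hx h1) (asymm h2)
  have hAirr : ∀ x, ¬ A x x := by
    rintro x ⟨-, -, ⟨h, -⟩ | ⟨h, -⟩⟩ <;> exact lt_irrefl _ h
  have memTw : ∀ x ∈ T, x ∈ w ∨ x ∈ w' := fun x hx => Finset.mem_union.mp hx
  -- triangle-freeness, since T is a union of two chains
  have htri : ∀ x y z, A x y → A y z → A x z → False := by
    intro x y z hxy hyz hxz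
    rcases memTw x hxy.1 with hx | hx <;> rcases memTw y hyz.1 with hy | hy <;>
      rcases memTw z hxz.2.1 with hz | hz
    · exact noInv w hw x hx y hy hxy.2.2
    · exact noInv w hw x hx y hy hxy.2.2
    · exact noInv w hw x hx z hz hxz.2.2
    · exact noInv w' hw' y hy z hz hyz.2.2
    · exact noInv w hw y hy z hz hyz.2.2
    · exact noInv w' hw' x hx z hz hxz.2.2
    · exact noInv w' hw' x hx y hy hxy.2.2
    · exact noInv w' hw' x hx y hy hxy.2.2
  have compOf : ∀ x y, x ∈ T → y ∈ T → x ≠ y → ¬ A x y →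
      ((x < y ∧ σ x < σ y) ∨ (y < x ∧ σ y < σ x)) := by
    intro x y hx hy hne hnadj
    have hσne : σ x ≠ σ y := fun h => hne (σ.injective h)
    rcases lt_or_gt_of_ne hne with h | h <;> rcases lt_or_gt_of_ne hσne with h' | h'
    · exact Or.inl ⟨h, h'⟩
    · exact absurd ⟨hx, hy, Or.inl ⟨h, h'⟩⟩ hnadj
    · exact absurd ⟨hx, hy, Or.inr ⟨h, h'⟩⟩ hnadj
    · exact Or.inr ⟨h, h'⟩
  -- the P4 lemma: the incomparability graph on T is P4-free (from separability)
  have hL3 : ∀ a b c d, A a b → A b c → A c d → A a d := by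
    intro a b c d hab hbc hcd
    by_contra hnad
    have had' : a ≠ d := by
      rintro rfl
      exact htri a b c hab hbc (hAsymm _ _ hcd)
    by_cases hac' : a = c
    · exact hnad (hac' ▸ hcd)
    by_cases hbd' : b = d
    · exact hnad (hbd' ▸ hab)
    have hnac : ¬ A a c := fun h => htri a b c hab hbc h
    have hnbd : ¬ A b d := fun h => htri b c d hbc hcd h
    have cac := compOf a c hab.1 hbc.2.1 hac' hnac
    have cbd := compOf b d hbc.1 hcd.2.1 hbd' hnbd
    have cad := compOf a d hab.1 hcd.2.1 had' hnad
    have iab := hab.2.2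
    have ibc := hbc.2.2
    have icd := hcd.2.2
    simp only [Fin.lt_def] at iab ibc icd cac cbd cad
    rcases p4_cases a.val b.val c.val d.val (σ a).val (σ b).val (σ c).val (σ d).val
      iab ibc icd cac cbd cad with h | h | h | h
    · exact hsep.2 (embed2413 σ a c b d h.1 h.2.1 h.2.2.1 h.2.2.2.1 h.2.2.2.2.1 h.2.2.2.2.2)
    · exact hsep.2 (embed2413 σ d b c a h.1 h.2.1 h.2.2.1 h.2.2.2.1 h.2.2.2.2.1 h.2.2.2.2.2)
    · exact hsep.1 (embed3142 σ b a d c h.1 h.2.1 h.2.2.1 h.2.2.2.1 h.2.2.2.2.1 h.2.2.2.2.2)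
    · exact hsep.1 (embed3142 σ c d a b h.1 h.2.1 h.2.2.1 h.2.2.2.1 h.2.2.2.2.1 h.2.2.2.2.2)
  -- now the recolouring
  set C : Finset (Fin n) := T ∩ u with hC
  have hCu : ∀ c ∈ C, c ∈ u := fun c hc => (Finset.mem_inter.mp hc).2
  set SS : Fin n → Prop := fun x => ∃ c ∈ C, x = c ∨ ∃ z, A x z ∧ A z c with hSS
  set Rch : Fin n → Prop := fun x => ∃ c ∈ C, x = c ∨ A x c ∨ ∃ z, A x z ∧ A z c with hRch
  set β : Finset (Fin n) := T.filter (fun x => SS x ∨ (¬ Rch x ∧ x ∈ w)) with hβ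
  have hβT : β ⊆ T := Finset.filter_subset _ _
  have mkA : ∀ p q : Fin n, p ∈ T → q ∈ T → p < q → ¬ σ p < σ q → A p q := by
    intro p q hp hq hpq hv
    refine ⟨hp, hq, Or.inl ⟨hpq, ?_⟩⟩
    have hne : σ q ≠ σ p := fun h => (ne_of_lt hpq).symm (σ.injective h)
    exact lt_of_le_of_ne (not_lt.mp hv) hne
  have hACC : ∀ c1 c2, c1 ∈ C → c2 ∈ C → A c1 c2 → False := by
    intro c1 c2 h1 h2 h
    exact noInv u hu c1 (hCu _ h1) c2 (hCu _ h2) h.2.2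
  refine ⟨T \ β, β, ?_, ?_, Finset.sdiff_disjoint, ?_, ?_⟩
  · -- α = T \ β is increasing
    intro p hp q hq hpq
    by_contra hv
    obtain ⟨hpT, hpβ⟩ := Finset.mem_sdiff.mp hp
    obtain ⟨hqT, hqβ⟩ := Finset.mem_sdiff.mp hq
    have hApq : A p q := mkA p q hpT hqT hpq hv
    have hnSSp : ¬ SS p := fun h => hpβ (Finset.mem_filter.mpr ⟨hpT, Or.inl h⟩)
    have hnSSq : ¬ SS q := fun h => hqβ (Finset.mem_filter.mpr ⟨hqT, Or.inl h⟩)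
    have hnwp : ¬ Rch p → p ∉ w := fun hr hwp =>
      hpβ (Finset.mem_filter.mpr ⟨hpT, Or.inr ⟨hr, hwp⟩⟩)
    have hnwq : ¬ Rch q → q ∉ w := fun hr hwq =>
      hqβ (Finset.mem_filter.mpr ⟨hqT, Or.inr ⟨hr, hwq⟩⟩)
    by_cases hRp : Rch p
    · obtain ⟨c1, hc1, h⟩ := hRp
      have hApc : A p c1 := by
        rcases h with rfl | h | ⟨z, hz, hz'⟩
        · exact absurd ⟨p, hc1, Or.inl rfl⟩ hnSSp
        · exact h
        · exact absurd ⟨c1, hc1, Or.inr ⟨z, hz, hz'⟩⟩ hnSSp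
      exact hnSSq ⟨c1, hc1, Or.inr ⟨p, hAsymm _ _ hApq, hApc⟩⟩
    by_cases hRq : Rch q
    · obtain ⟨c2, hc2, h⟩ := hRq
      have hAqc : A q c2 := by
        rcases h with rfl | h | ⟨z, hz, hz'⟩
        · exact absurd ⟨q, hc2, Or.inl rfl⟩ hnSSq
        · exact h
        · exact absurd ⟨c2, hc2, Or.inr ⟨z, hz, hz'⟩⟩ hnSSq
      exact hnSSp ⟨c2, hc2, Or.inr ⟨q, hApq, hAqc⟩⟩
    · have hpw' : p ∈ w' := (memTw p hpT).resolve_left (hnwp hRp)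
      have hqw' : q ∈ w' := (memTw q hqT).resolve_left (hnwq hRq)
      exact noInv w' hw' p hpw' q hqw' hApq.2.2
  · -- β is increasing
    intro p hp q hq hpq
    by_contra hv
    obtain ⟨hpT, hpP⟩ := Finset.mem_filter.mp hp
    obtain ⟨hqT, hqP⟩ := Finset.mem_filter.mp hq
    have hApq : A p q := mkA p q hpT hqT hpq hv
    rcases hpP with hSSp | ⟨hnRp, hpw⟩
    · obtain ⟨c1, hc1, hp1⟩ := hSSp
      rcases hqP with hSSq | ⟨hnRq, hqw⟩
      · obtain ⟨c2, hc2, hq1⟩ := hSSq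
        have hA12 : A c1 c2 := by
          rcases hp1 with rfl | ⟨z1, hz1, hz1'⟩ <;> rcases hq1 with rfl | ⟨z2, hz2, hz2'⟩
          · exact hApq
          · exact hL3 _ q z2 _ hApq hz2 hz2'
          · exact hL3 _ z1 p _ (hAsymm _ _ hz1') (hAsymm _ _ hz1) hApq
          · exact hL3 _ q z2 _ (hL3 _ z1 p _ (hAsymm _ _ hz1') (hAsymm _ _ hz1) hApq) hz2 hz2'
        exact hACC _ _ hc1 hc2 hA12
      · refine hnRq ⟨c1, hc1, ?_⟩
        rcases hp1 with rfl | ⟨z1, hz1, hz1'⟩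
        · exact Or.inr (Or.inl (hAsymm _ _ hApq))
        · exact Or.inr (Or.inl (hL3 q p z1 c1 (hAsymm _ _ hApq) hz1 hz1'))
    · rcases hqP with hSSq | ⟨hnRq, hqw⟩
      · obtain ⟨c2, hc2, hq1⟩ := hSSq
        refine hnRp ⟨c2, hc2, ?_⟩
        rcases hq1 with rfl | ⟨z2, hz2, hz2'⟩
        · exact Or.inr (Or.inl hApq)
        · exact Or.inr (Or.inl (hL3 p q z2 c2 hApq hz2 hz2'))
      · exact noInv w hw p hpw q hqw hApq.2.2
  · exact Finset.sdiff_union_of_subset hβT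
  · -- (T \ β) ∩ u = ∅
    rw [Finset.eq_empty_iff_forall_notMem]
    intro x hx
    obtain ⟨hx1, hx2⟩ := Finset.mem_inter.mp hx
    obtain ⟨hxT, hxβ⟩ := Finset.mem_sdiff.mp hx1
    have hxC : x ∈ C := Finset.mem_inter.mpr ⟨hxT, hx2⟩
    exact hxβ (Finset.mem_filter.mpr ⟨hxT, Or.inl ⟨x, hxC, Or.inl rfl⟩⟩)
end

section
/- Let σ be a separable permutation with shape(σ) = λ = (λ_1, λ_2, …). Then for any d ≥ 1, there exist d pairwise disjoint increasing subsequences u^1, …, u^d of σ such that |u^i| = λ_i for each 1 ≤ i ≤ d. -/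
namespace Aux


def GSet (w : List ℕ) (d : ℕ) : Set ℕ :=
  {N | ∃ S : Fin d → Finset (Fin w.length),
    (∀ i, WkInc w (S i)) ∧ (∀ i j, i ≠ j → Disjoint (S i) (S j)) ∧
    N = ∑ i, (S i).card}

lemma greene_eq (w : List ℕ) (d : ℕ) : greene w d = sSup (GSet w d) := rfl

lemma zero_mem_GSet (w : List ℕ) (d : ℕ) : 0 ∈ GSet w d := by
  refine ⟨fun _ => ∅, fun i => by intro p hp; simp at hp, fun i j _ => by simp, by simp⟩

lemma GSet_bdd (w : List ℕ) (d : ℕ) : ∀ N ∈ GSet w d, N ≤ d * w.length := by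
  rintro N ⟨S, _, _, rfl⟩
  calc ∑ i, (S i).card ≤ ∑ _i : Fin d, w.length := by
        apply Finset.sum_le_sum
        intro i _
        simpa using (Finset.card_le_card (Finset.subset_univ (S i)))
    _ = d * w.length := by simp [Finset.sum_const, mul_comm]

lemma GSet_bddAbove (w : List ℕ) (d : ℕ) : BddAbove (GSet w d) :=
  ⟨d * w.length, fun N hN => GSet_bdd w d N hN⟩

lemma le_greene_of_mem {w : List ℕ} {d N : ℕ} (h : N ∈ GSet w d) : N ≤ greene w d :=
  le_csSup (GSet_bddAbove w d) h

lemma greene_le {w : List ℕ} {d X : ℕ} (h : ∀ N ∈ GSet w d, N ≤ X) : greene w d ≤ X :=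
  csSup_le ⟨0, zero_mem_GSet w d⟩ h

lemma greene_mem (w : List ℕ) (d : ℕ) : greene w d ∈ GSet w d :=
  Nat.sSup_mem ⟨0, zero_mem_GSet w d⟩ (GSet_bddAbove w d)

lemma greene_zero (w : List ℕ) : greene w 0 = 0 :=
  Nat.le_zero.mp (greene_le (by rintro N ⟨S, _, _, rfl⟩; simp))

lemma greene_mono (w : List ℕ) : Monotone (greene w) := by
  apply monotone_nat_of_le_succ
  intro d
  apply greene_le
  rintro N ⟨S, hW, hD, rfl⟩
  apply le_greene_of_mem
  refine ⟨Fin.lastCases ∅ S, ?_, ?_, ?_⟩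
  · intro i
    induction i using Fin.lastCases with
    | last => intro p hp; simp at hp
    | cast i => simpa using hW i
  · intro i j hij
    induction i using Fin.lastCases with
    | last => simp
    | cast i =>
      induction j using Fin.lastCases with
      | last => simp
      | cast j =>
        simp only [Fin.lastCases_castSucc]
        exact hD i j (by simpa [Fin.castSucc_inj] using hij)
  · rw [Fin.sum_univ_castSucc]
    simp


variable (w1 w2 : List ℕ)

lemma len_app : (w1 ++ w2).length = w1.length + w2.length := by simp

def emb1 (i : Fin w1.length) : Fin (w1 ++ w2).length :=
  ⟨i, by rw [len_app]; omega⟩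

def emb2 (j : Fin w2.length) : Fin (w1 ++ w2).length :=
  ⟨w1.length + j, by rw [len_app]; omega⟩

lemma emb1_inj : Function.Injective (emb1 w1 w2) := by
  intro a b h; simpa [emb1, Fin.ext_iff] using h

lemma emb2_inj : Function.Injective (emb2 w1 w2) := by
  intro a b h; simp only [emb2, Fin.mk.injEq] at h; exact Fin.ext (by omega)

lemma get_emb1 (i : Fin w1.length) : (w1 ++ w2).get (emb1 w1 w2 i) = w1.get i := by
  simp [emb1, List.getElem_append, i.isLt]

lemma get_emb2 (j : Fin w2.length) : (w1 ++ w2).get (emb2 w1 w2 j) = w2.get j := by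
  simp [emb2, List.getElem_append_right (by omega : w1.length ≤ w1.length + (j:ℕ))]

variable {w1 w2}

def res1 (S : Finset (Fin (w1 ++ w2).length)) : Finset (Fin w1.length) :=
  Finset.univ.filter (fun i => emb1 w1 w2 i ∈ S)

def res2 (S : Finset (Fin (w1 ++ w2).length)) : Finset (Fin w2.length) :=
  Finset.univ.filter (fun j => emb2 w1 w2 j ∈ S)

lemma mem_res1 {S} {i : Fin w1.length} : i ∈ res1 S ↔ emb1 w1 w2 i ∈ S := by
  simp [res1]

lemma mem_res2 {S} {j : Fin w2.length} : j ∈ res2 S ↔ emb2 w1 w2 j ∈ S := by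
  simp [res2]

lemma card_split (S : Finset (Fin (w1 ++ w2).length)) :
    S.card = (res1 S).card + (res2 S).card := by
  classical
  have hsplit : S.card = (S.filter (fun p : Fin (w1 ++ w2).length => (p : ℕ) < w1.length)).card +
      (S.filter (fun p : Fin (w1 ++ w2).length => ¬ (p : ℕ) < w1.length)).card :=
    (Finset.card_filter_add_card_filter_not _).symm
  have h1 : (S.filter (fun p : Fin (w1 ++ w2).length => (p : ℕ) < w1.length)) =
      (res1 S).image (emb1 w1 w2) := by
    ext p
    simp only [Finset.mem_filter, Finset.mem_image, mem_res1]
    constructor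
    · rintro ⟨hp, hlt⟩
      refine ⟨⟨(p : ℕ), hlt⟩, ?_, Fin.ext rfl⟩
      have he : emb1 w1 w2 ⟨(p : ℕ), hlt⟩ = p := Fin.ext rfl
      rwa [he]
    · rintro ⟨i, hi, rfl⟩; exact ⟨hi, i.isLt⟩
  have h2 : (S.filter (fun p : Fin (w1 ++ w2).length => ¬ (p : ℕ) < w1.length)) =
      (res2 S).image (emb2 w1 w2) := by
    ext p
    simp only [Finset.mem_filter, Finset.mem_image, mem_res2]
    constructor
    · rintro ⟨hp, hlt⟩
      have hplen : (p : ℕ) < w1.length + w2.length :=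
        lt_of_lt_of_le p.isLt (len_app w1 w2).le
      refine ⟨⟨(p : ℕ) - w1.length, by omega⟩, ?_, Fin.ext (by simp [emb2]; omega)⟩
      have he : emb2 w1 w2 ⟨(p : ℕ) - w1.length, by omega⟩ = p := Fin.ext (by simp [emb2]; omega)
      rwa [he]
    · rintro ⟨j, hj, rfl⟩
      refine ⟨hj, by simp [emb2]⟩
  rw [hsplit, h1, h2, Finset.card_image_of_injective _ (emb1_inj w1 w2),
    Finset.card_image_of_injective _ (emb2_inj w1 w2)]

lemma wkInc_res1 {S} (h : WkInc (w1 ++ w2) S) : WkInc w1 (res1 S) := by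
  intro p hp q hq hpq
  rw [mem_res1] at hp hq
  have := h _ hp _ hq hpq
  rw [get_emb1, get_emb1] at this
  exact this

lemma wkInc_res2 {S} (h : WkInc (w1 ++ w2) S) : WkInc w2 (res2 S) := by
  intro p hp q hq hpq
  rw [mem_res2] at hp hq
  have := h _ hp _ hq (by simp only [emb2, Fin.lt_def]; omega)
  rw [get_emb2, get_emb2] at this
  exact this

lemma disjoint_res1 {S T} (h : Disjoint S T) : Disjoint (res1 (w1 := w1) (w2 := w2) S) (res1 T) := by
  rw [Finset.disjoint_left] at h ⊢
  intro i hi hi'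
  exact h (mem_res1.mp hi) (mem_res1.mp hi')

lemma disjoint_res2 {S T} (h : Disjoint S T) : Disjoint (res2 (w1 := w1) (w2 := w2) S) (res2 T) := by
  rw [Finset.disjoint_left] at h ⊢
  intro i hi hi'
  exact h (mem_res2.mp hi) (mem_res2.mp hi')

/-- combination of a block-1 and a block-2 subsequence -/
def comb (S1 : Finset (Fin w1.length)) (S2 : Finset (Fin w2.length)) :
    Finset (Fin (w1 ++ w2).length) :=
  S1.image (emb1 w1 w2) ∪ S2.image (emb2 w1 w2)

lemma card_comb (S1 : Finset (Fin w1.length)) (S2 : Finset (Fin w2.length)) :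
    (comb S1 S2).card = S1.card + S2.card := by
  classical
  rw [comb, Finset.card_union_of_disjoint, Finset.card_image_of_injective _ (emb1_inj w1 w2),
    Finset.card_image_of_injective _ (emb2_inj w1 w2)]
  rw [Finset.disjoint_left]
  rintro p hp hq
  simp only [Finset.mem_image] at hp hq
  obtain ⟨a, _, rfl⟩ := hp
  obtain ⟨b, _, hb⟩ := hq
  have := a.isLt
  simp only [emb2, emb1, Fin.ext_iff] at hb
  omega

lemma disjoint_comb {S1 T1 : Finset (Fin w1.length)} {S2 T2 : Finset (Fin w2.length)}
    (h1 : Disjoint S1 T1) (h2 : Disjoint S2 T2) : Disjoint (comb S1 S2) (comb T1 T2) := by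
  classical
  rw [Finset.disjoint_left]
  intro p hp hq
  simp only [comb, Finset.mem_union, Finset.mem_image] at hp hq
  rcases hp with ⟨a, ha, rfl⟩ | ⟨a, ha, rfl⟩ <;> rcases hq with ⟨b, hb, hba⟩ | ⟨b, hb, hba⟩
  · exact Finset.disjoint_left.mp h1 ha (by rwa [emb1_inj w1 w2 hba] at hb)
  · have := a.isLt; simp only [emb2, emb1, Fin.ext_iff] at hba; omega
  · have := b.isLt; simp only [emb2, emb1, Fin.ext_iff] at hba; omega
  · exact Finset.disjoint_left.mp h2 ha (by rwa [emb2_inj w1 w2 hba] at hb)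

lemma wkInc_comb (hcross : ∀ (i : Fin w1.length) (j : Fin w2.length), w1.get i ≤ w2.get j)
    {S1 : Finset (Fin w1.length)} {S2 : Finset (Fin w2.length)}
    (h1 : WkInc w1 S1) (h2 : WkInc w2 S2) : WkInc (w1 ++ w2) (comb S1 S2) := by
  classical
  intro p hp q hq hpq
  simp only [comb, Finset.mem_union, Finset.mem_image] at hp hq
  rcases hp with ⟨a, ha, rfl⟩ | ⟨a, ha, rfl⟩ <;> rcases hq with ⟨b, hb, rfl⟩ | ⟨b, hb, rfl⟩
  · rw [get_emb1, get_emb1]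
    exact h1 _ ha _ hb hpq
  · rw [get_emb1, get_emb2]; exact hcross a b
  · exfalso; have := b.isLt; simp only [emb1, emb2, Fin.lt_def] at hpq; omega
  · rw [get_emb2, get_emb2]
    refine h2 _ ha _ hb ?_
    simp only [emb2, Fin.lt_def] at hpq ⊢; omega

/-- in a skew (strictly decreasing across) append, a weakly increasing set lies in one block -/
lemma res_empty_of_skew (hcross : ∀ (i : Fin w1.length) (j : Fin w2.length), w2.get j < w1.get i)
    {S} (h : WkInc (w1 ++ w2) S) : res1 S = ∅ ∨ res2 S = ∅ := by
  classical
  by_contra hc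
  push_neg at hc
  obtain ⟨i, hi⟩ := hc.1
  obtain ⟨j, hj⟩ := hc.2
  rw [mem_res1] at hi; rw [mem_res2] at hj
  have hlt : emb1 w1 w2 i < emb2 w1 w2 j := by
    simp only [emb1, emb2, Fin.lt_def]; omega
  have := h _ hi _ hj hlt
  rw [get_emb1, get_emb2] at this
  exact absurd this (not_le.mpr (hcross i j))



/-- max-plus convolution -/
def maxconv (P1 P2 : ℕ → ℕ) (e : ℕ) : ℕ :=
  Finset.sup (Finset.range (e + 1)) fun a => P1 a + P2 (e - a)

lemma le_maxconv (P1 P2 : ℕ → ℕ) {a e : ℕ} (h : a ≤ e) :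
    P1 a + P2 (e - a) ≤ maxconv P1 P2 e :=
  Finset.le_sup (f := fun a => P1 a + P2 (e - a)) (Finset.mem_range.mpr (by omega))

lemma maxconv_le {P1 P2 : ℕ → ℕ} {e X : ℕ} (h : ∀ a ≤ e, P1 a + P2 (e - a) ≤ X) :
    maxconv P1 P2 e ≤ X :=
  Finset.sup_le fun a ha => h a (by simpa using Nat.lt_succ_iff.mp (Finset.mem_range.mp ha))

lemma maxconv_attained (P1 P2 : ℕ → ℕ) (e : ℕ) :
    ∃ a ≤ e, maxconv P1 P2 e = P1 a + P2 (e - a) := by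
  obtain ⟨a, ha, hval⟩ := Finset.exists_mem_eq_sup (Finset.range (e + 1))
    ⟨0, Finset.mem_range.mpr (by omega)⟩ fun a => P1 a + P2 (e - a)
  exact ⟨a, Nat.lt_succ_iff.mp (Finset.mem_range.mp ha), hval⟩

lemma maxconv_mono {P1 P2 : ℕ → ℕ} (h2 : Monotone P2) :
    Monotone (maxconv P1 P2) := by
  apply monotone_nat_of_le_succ
  intro e
  apply maxconv_le
  intro a ha
  calc P1 a + P2 (e - a) ≤ P1 a + P2 (e + 1 - a) := by
        have : e - a ≤ e + 1 - a := by omega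
        exact Nat.add_le_add_left (h2 this) _
    _ ≤ maxconv P1 P2 (e + 1) := le_maxconv _ _ (by omega)

/-- concavity, in cross form -/
def Conc (P : ℕ → ℕ) : Prop := ∀ k l, k ≤ l → P (l + 1) + P k ≤ P l + P (k + 1)

lemma conc_of_step {P : ℕ → ℕ} (h : ∀ k, P (k + 2) + P k ≤ P (k + 1) + P (k + 1)) :
    Conc P := by
  intro k l hkl
  induction l with
  | zero => interval_cases k; omega
  | succ m ih =>
    rcases Nat.lt_or_ge k (m + 1) with hk | hk
    · have h1 := ih (by omega)
      have h2 := h m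
      rw [show m + 1 + 1 = m + 2 by omega]
      omega
    · have : k = m + 1 := by omega
      subst this; omega

lemma conc_maxconv {P1 P2 : ℕ → ℕ} (hc1 : Conc P1) (hc2 : Conc P2) :
    Conc (maxconv P1 P2) := by
  apply conc_of_step
  intro k
  obtain ⟨a, ha, hA⟩ := maxconv_attained P1 P2 (k + 2)
  obtain ⟨c, hc, hC⟩ := maxconv_attained P1 P2 k
  rcases Nat.lt_or_ge c a with hca | hca
  · -- a ≥ c + 1 : move one unit of P1 from a to c
    have h1 := hc1 c (a - 1) (by omega)
    rw [Nat.sub_add_cancel (by omega : 1 ≤ a)] at h1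
    have h2 := le_maxconv P1 P2 (by omega : a - 1 ≤ k + 1)
    have e2 : k + 1 - (a - 1) = k + 2 - a := by omega
    rw [e2] at h2
    have h3 := le_maxconv P1 P2 (by omega : c + 1 ≤ k + 1)
    have e3 : k + 1 - (c + 1) = k - c := by omega
    rw [e3] at h3
    omega
  · -- a ≤ c : move one unit of P2
    have hb : k - c + 1 ≤ k + 2 - a - 1 + 1 := by omega
    have h1 := hc2 (k - c) (k + 2 - a - 1) (by omega)
    rw [Nat.sub_add_cancel (by omega : 1 ≤ k + 2 - a)] at h1
    have h2 := le_maxconv P1 P2 (by omega : a ≤ k + 1)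
    have e2 : k + 1 - a = k + 2 - a - 1 := by omega
    rw [e2] at h2
    have h3 := le_maxconv P1 P2 (by omega : c ≤ k + 1)
    have e3 : k + 1 - c = k - c + 1 := by omega
    rw [e3] at h3
    omega



lemma sum_card_le_length {w : List ℕ} {d : ℕ} (S : Fin d → Finset (Fin w.length))
    (hD : ∀ i j, i ≠ j → Disjoint (S i) (S j)) :
    ∑ i, (S i).card ≤ w.length := by
  classical
  rw [← Finset.card_biUnion (fun i _ j _ hij => hD i j hij)]
  simpa using Finset.card_le_card (Finset.subset_univ (Finset.univ.biUnion S))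

lemma sum_card_le_greene {w : List ℕ} {d : ℕ} (S : Fin d → Finset (Fin w.length))
    (hW : ∀ i, WkInc w (S i)) (hD : ∀ i j, i ≠ j → Disjoint (S i) (S j))
    (T : Finset (Fin d)) : ∑ i ∈ T, (S i).card ≤ greene w T.card := by
  apply le_greene_of_mem
  refine ⟨fun k => S (T.equivFin.symm k), fun k => hW _, ?_, ?_⟩
  · intro i j hij
    refine hD _ _ (fun hh => hij ?_)
    have := T.equivFin.symm.injective (Subtype.ext hh)
    exact this
  · rw [← Finset.sum_coe_sort T (fun i => (S i).card)]
    exact Fintype.sum_equiv T.equivFin (fun x => (S (x : Fin d)).card)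
      (fun k => (S ((T.equivFin.symm k) : Fin d)).card)
      (fun x => by simp)

lemma castLE_rfl {d : ℕ} (h : d ≤ d) (i : Fin d) : Fin.castLE h i = i := Fin.ext rfl

/-- a `d`-family whose partial sums realize all the `greene` values up to `d` -/
def GoodFam (w : List ℕ) (d : ℕ) (u : Fin d → Finset (Fin w.length)) : Prop :=
  (∀ i, WkInc w (u i)) ∧ (∀ i j, i ≠ j → Disjoint (u i) (u j)) ∧
    ∀ e (he : e ≤ d), ∑ i : Fin e, (u (Fin.castLE he i)).card = greene w e

def Good (w : List ℕ) : Prop := Conc (greene w) ∧ ∀ d, ∃ u, GoodFam w d u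

lemma goodfam_sum_total {w : List ℕ} {d : ℕ} {u : Fin d → Finset (Fin w.length)}
    (h : GoodFam w d u) : ∑ i, (u i).card = greene w d := by
  have := h.2.2 d le_rfl
  rw [← this]
  exact Finset.sum_congr rfl (fun i _ => by rw [castLE_rfl])

lemma goodfam_card {w : List ℕ} {d : ℕ} {u : Fin d → Finset (Fin w.length)}
    (h : GoodFam w d u) (i : Fin d) :
    (u i).card + greene w (i : ℕ) = greene w ((i : ℕ) + 1) := by
  have h1 := h.2.2 ((i : ℕ) + 1) (by omega)
  have h0 := h.2.2 (i : ℕ) (by omega)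
  rw [Fin.sum_univ_castSucc] at h1
  have hlast : (Fin.castLE (by omega : (i:ℕ)+1 ≤ d) (Fin.last (i:ℕ))) = i := Fin.ext rfl
  rw [hlast] at h1
  have hcongr : ∀ j : Fin (i : ℕ),
      (u (Fin.castLE (by omega : (i:ℕ)+1 ≤ d) j.castSucc)).card =
      (u (Fin.castLE (by omega : (i:ℕ) ≤ d) j)).card := fun j => rfl
  rw [Finset.sum_congr rfl (fun j _ => hcongr j), h0] at h1
  omega

/-- the empty word is good -/
lemma greene_nil (d : ℕ) : greene [] d = 0 := by
  apply Nat.le_zero.mp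
  apply greene_le
  rintro N ⟨S, _, hD, rfl⟩
  have := sum_card_le_length S hD
  simpa using this

lemma good_nil : Good [] := by
  constructor
  · intro k l _; simp [greene_nil]
  · intro d
    refine ⟨fun _ => ∅, fun i => by intro p hp; simp at hp, fun i j _ => by simp, ?_⟩
    intro e he
    simp [greene_nil]

/-- singleton words are good -/
lemma greene_single (x : ℕ) {e : ℕ} (he : 1 ≤ e) : greene [x] e = 1 := by
  apply le_antisymm
  · apply greene_le
    rintro N ⟨S, _, hD, rfl⟩
    have := sum_card_le_length S hD
    simpa using this
  · apply le_greene_of_mem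
    refine ⟨fun i => if (i : ℕ) = 0 then {(⟨0, by simp⟩ : Fin [x].length)} else ∅, ?_, ?_, ?_⟩
    · intro i p _ q _ hpq
      exfalso
      have hlen : ([x] : List ℕ).length = 1 := rfl
      have hp1 := p.isLt
      have hq1 := q.isLt
      have hlt : (p : ℕ) < (q : ℕ) := hpq
      omega
    · intro i j hij
      by_cases hi : (i : ℕ) = 0 <;> by_cases hj : (j : ℕ) = 0 <;> simp [hi, hj]
      exact absurd (Fin.ext (by omega)) hij
    · rw [Finset.sum_eq_single (⟨0, by omega⟩ : Fin e)]
      · simp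
      · intro i _ hi
        have : (i : ℕ) ≠ 0 := fun h => hi (Fin.ext h)
        simp [this]
      · intro h; exact absurd (Finset.mem_univ _) h

lemma good_single (x : ℕ) : Good [x] := by
  constructor
  · intro k l hkl
    rcases Nat.eq_zero_or_pos k with rfl | hk
    · have e1 : greene [x] (l + 1) = 1 := greene_single x (by omega)
      have e2 := greene_zero [x]
      have e3 : greene [x] (0 + 1) = 1 := greene_single x (by omega)
      omega
    · have e1 : greene [x] (l + 1) = 1 := greene_single x (by omega)
      have e2 : greene [x] k = 1 := greene_single x (by omega)
      have e3 : greene [x] l = 1 := greene_single x (by omega)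
      have e4 : greene [x] (k + 1) = 1 := greene_single x (by omega)
      omega
  · intro d
    refine ⟨fun i => if (i : ℕ) = 0 then {(⟨0, by simp⟩ : Fin [x].length)} else ∅, ?_, ?_, ?_⟩
    · intro i p _ q _ hpq
      exfalso
      have hlen : ([x] : List ℕ).length = 1 := rfl
      have hp1 := p.isLt
      have hq1 := q.isLt
      have hlt : (p : ℕ) < (q : ℕ) := hpq
      omega
    · intro i j hij
      by_cases hi : (i : ℕ) = 0 <;> by_cases hj : (j : ℕ) = 0 <;> simp [hi, hj]
      exact absurd (Fin.ext (by omega)) hij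
    · intro e he
      rcases Nat.eq_zero_or_pos e with rfl | hepos
      · simp [greene_zero]
      · rw [greene_single x hepos]
        rw [Finset.sum_eq_single (⟨0, by omega⟩ : Fin e)]
        · simp
        · intro i _ hi
          have hv : ¬ (i : ℕ) = 0 := fun h => hi (Fin.ext h)
          simp [hv]
        · intro h; exact absurd (Finset.mem_univ _) h



lemma maxconv_zero (P1 P2 : ℕ → ℕ) : maxconv P1 P2 0 = P1 0 + P2 0 := by
  apply le_antisymm
  · apply maxconv_le
    intro a ha
    have : a = 0 := by omega
    subst this
    exact le_rfl
  · exact le_maxconv P1 P2 le_rfl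

/-- direct-sum: splitting upper bound (no hypotheses needed) -/
lemma greene_app_le (w1 w2 : List ℕ) (d : ℕ) :
    greene (w1 ++ w2) d ≤ greene w1 d + greene w2 d := by
  apply greene_le
  rintro N ⟨S, hW, hD, rfl⟩
  have e1 : ∑ i, (S i).card = ∑ i, (res1 (S i)).card + ∑ i, (res2 (S i)).card := by
    rw [← Finset.sum_add_distrib]
    exact Finset.sum_congr rfl fun i _ => card_split (S i)
  have le1 : ∑ i, (res1 (S i)).card ≤ greene w1 d :=
    le_greene_of_mem ⟨fun i => res1 (S i), fun i => wkInc_res1 (hW i),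
      fun i j hij => disjoint_res1 (hD i j hij), rfl⟩
  have le2 : ∑ i, (res2 (S i)).card ≤ greene w2 d :=
    le_greene_of_mem ⟨fun i => res2 (S i), fun i => wkInc_res2 (hW i),
      fun i j hij => disjoint_res2 (hD i j hij), rfl⟩
  omega

lemma greene_app_direct {w1 w2 : List ℕ}
    (hcross : ∀ (i : Fin w1.length) (j : Fin w2.length), w1.get i ≤ w2.get j) (d : ℕ) :
    greene (w1 ++ w2) d = greene w1 d + greene w2 d := by
  refine le_antisymm (greene_app_le w1 w2 d) ?_
  obtain ⟨S1, hW1, hD1, hsum1⟩ := greene_mem w1 d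
  obtain ⟨S2, hW2, hD2, hsum2⟩ := greene_mem w2 d
  apply le_greene_of_mem
  refine ⟨fun i => comb (S1 i) (S2 i), fun i => wkInc_comb hcross (hW1 i) (hW2 i),
    fun i j hij => disjoint_comb (hD1 i j hij) (hD2 i j hij), ?_⟩
  rw [hsum1, hsum2, ← Finset.sum_add_distrib]
  exact Finset.sum_congr rfl fun i _ => (card_comb _ _).symm

lemma good_append_direct {w1 w2 : List ℕ}
    (hcross : ∀ (i : Fin w1.length) (j : Fin w2.length), w1.get i ≤ w2.get j)
    (h1 : Good w1) (h2 : Good w2) : Good (w1 ++ w2) := by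
  constructor
  · intro k l hkl
    have c1 := h1.1 k l hkl
    have c2 := h2.1 k l hkl
    rw [greene_app_direct hcross, greene_app_direct hcross,
      greene_app_direct hcross, greene_app_direct hcross]
    omega
  · intro d
    obtain ⟨u1, hW1, hD1, hs1⟩ := h1.2 d
    obtain ⟨u2, hW2, hD2, hs2⟩ := h2.2 d
    refine ⟨fun i => comb (u1 i) (u2 i), fun i => wkInc_comb hcross (hW1 i) (hW2 i),
      fun i j hij => disjoint_comb (hD1 i j hij) (hD2 i j hij), ?_⟩
    intro e he
    rw [greene_app_direct hcross]
    rw [← hs1 e he, ← hs2 e he, ← Finset.sum_add_distrib]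
    exact Finset.sum_congr rfl fun i _ => card_comb _ _

/-- skew: splitting upper bound -/
lemma greene_app_skew_le {w1 w2 : List ℕ}
    (hcross : ∀ (i : Fin w1.length) (j : Fin w2.length), w2.get j < w1.get i) (d : ℕ) :
    greene (w1 ++ w2) d ≤ maxconv (greene w1) (greene w2) d := by
  classical
  apply greene_le
  rintro N ⟨S, hW, hD, rfl⟩
  set T1 := Finset.univ.filter fun i : Fin d => (res1 (S i)).Nonempty with hT1
  set T2 := Finset.univ.filter fun i : Fin d => (res2 (S i)).Nonempty with hT2
  have hdisj : Disjoint T1 T2 := by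
    rw [Finset.disjoint_left]
    intro i hi1 hi2
    rw [hT1, Finset.mem_filter] at hi1
    rw [hT2, Finset.mem_filter] at hi2
    rcases res_empty_of_skew hcross (hW i) with h | h
    · rw [h] at hi1; exact absurd hi1.2 (by simp)
    · rw [h] at hi2; exact absurd hi2.2 (by simp)
  have hcard : T1.card + T2.card ≤ d := by
    rw [← Finset.card_union_of_disjoint hdisj]
    calc (T1 ∪ T2).card ≤ (Finset.univ : Finset (Fin d)).card := Finset.card_le_univ _
      _ = d := by simp
  have hs1 : ∑ i, (res1 (S i)).card = ∑ i ∈ T1, (res1 (S i)).card := by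
    refine (Finset.sum_subset (Finset.subset_univ T1) ?_).symm
    intro i _ hi
    rw [hT1, Finset.mem_filter] at hi
    push_neg at hi
    have := hi (Finset.mem_univ i)
    rw [this]; rfl
  have hs2 : ∑ i, (res2 (S i)).card = ∑ i ∈ T2, (res2 (S i)).card := by
    refine (Finset.sum_subset (Finset.subset_univ T2) ?_).symm
    intro i _ hi
    rw [hT2, Finset.mem_filter] at hi
    push_neg at hi
    have := hi (Finset.mem_univ i)
    rw [this]; rfl
  have le1 : ∑ i ∈ T1, (res1 (S i)).card ≤ greene w1 T1.card :=
    sum_card_le_greene _ (fun i => wkInc_res1 (hW i)) (fun i j hij => disjoint_res1 (hD i j hij)) T1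
  have le2 : ∑ i ∈ T2, (res2 (S i)).card ≤ greene w2 T2.card :=
    sum_card_le_greene _ (fun i => wkInc_res2 (hW i)) (fun i j hij => disjoint_res2 (hD i j hij)) T2
  have lemono : greene w2 T2.card ≤ greene w2 (d - T1.card) :=
    greene_mono w2 (by omega)
  have hmc := le_maxconv (greene w1) (greene w2) (show T1.card ≤ d by omega)
  have etotal : ∑ i, (S i).card = ∑ i, (res1 (S i)).card + ∑ i, (res2 (S i)).card := by
    rw [← Finset.sum_add_distrib]
    exact Finset.sum_congr rfl fun i _ => card_split (S i)
  omega

lemma wkInc_image1 {w1 w2 : List ℕ} {S : Finset (Fin w1.length)} (h : WkInc w1 S) :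
    WkInc (w1 ++ w2) (S.image (emb1 w1 w2)) := by
  classical
  intro p hp q hq hpq
  simp only [Finset.mem_image] at hp hq
  obtain ⟨a, ha, rfl⟩ := hp
  obtain ⟨b, hb, rfl⟩ := hq
  rw [get_emb1, get_emb1]
  exact h _ ha _ hb hpq

lemma wkInc_image2 {w1 w2 : List ℕ} {S : Finset (Fin w2.length)} (h : WkInc w2 S) :
    WkInc (w1 ++ w2) (S.image (emb2 w1 w2)) := by
  classical
  intro p hp q hq hpq
  simp only [Finset.mem_image] at hp hq
  obtain ⟨a, ha, rfl⟩ := hp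
  obtain ⟨b, hb, rfl⟩ := hq
  rw [get_emb2, get_emb2]
  refine h _ ha _ hb ?_
  have : (emb2 w1 w2 a : ℕ) < (emb2 w1 w2 b : ℕ) := hpq
  simp only [emb2] at this
  exact show (a : ℕ) < (b : ℕ) by omega

lemma disjoint_image1 {w1 w2 : List ℕ} {S T : Finset (Fin w1.length)} (h : Disjoint S T) :
    Disjoint (S.image (emb1 w1 w2)) (T.image (emb1 w1 w2)) :=
  (Finset.disjoint_image (emb1_inj w1 w2)).mpr h

lemma disjoint_image2 {w1 w2 : List ℕ} {S T : Finset (Fin w2.length)} (h : Disjoint S T) :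
    Disjoint (S.image (emb2 w1 w2)) (T.image (emb2 w1 w2)) :=
  (Finset.disjoint_image (emb2_inj w1 w2)).mpr h

lemma disjoint_image12 {w1 w2 : List ℕ} (S : Finset (Fin w1.length)) (T : Finset (Fin w2.length)) :
    Disjoint (S.image (emb1 w1 w2)) (T.image (emb2 w1 w2)) := by
  classical
  rw [Finset.disjoint_left]
  intro p hp hq
  simp only [Finset.mem_image] at hp hq
  obtain ⟨a, _, rfl⟩ := hp
  obtain ⟨b, _, hb⟩ := hq
  have h1 := a.isLt
  simp only [emb2, emb1, Fin.ext_iff] at hb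
  omega

/-- the greedy split-point sequence -/
def aseq (P1 P2 : ℕ → ℕ) : ℕ → ℕ := fun e =>
  Nat.rec 0 (fun e a => if P1 a + P2 (e + 1 - a) ≤ P1 (a + 1) + P2 (e - a) then a + 1 else a) e

lemma aseq_zero (P1 P2 : ℕ → ℕ) : aseq P1 P2 0 = 0 := rfl

lemma aseq_succ (P1 P2 : ℕ → ℕ) (e : ℕ) :
    aseq P1 P2 (e + 1) = if P1 (aseq P1 P2 e) + P2 (e + 1 - aseq P1 P2 e) ≤
      P1 (aseq P1 P2 e + 1) + P2 (e - aseq P1 P2 e) then aseq P1 P2 e + 1 else aseq P1 P2 e := rfl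

lemma aseq_step (P1 P2 : ℕ → ℕ) (e : ℕ) :
    aseq P1 P2 (e + 1) = aseq P1 P2 e + 1 ∨ aseq P1 P2 (e + 1) = aseq P1 P2 e := by
  rw [aseq_succ]
  split_ifs
  · exact Or.inl rfl
  · exact Or.inr rfl

lemma aseq_le (P1 P2 : ℕ → ℕ) (e : ℕ) : aseq P1 P2 e ≤ e := by
  induction e with
  | zero => rw [aseq_zero]
  | succ m ih => rcases aseq_step P1 P2 m with h | h <;> omega

lemma aseq_mono (P1 P2 : ℕ → ℕ) : Monotone (aseq P1 P2) :=
  monotone_nat_of_le_succ fun e => by rcases aseq_step P1 P2 e with h | h <;> omega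

lemma bseq_mono (P1 P2 : ℕ → ℕ) : Monotone (fun e => e - aseq P1 P2 e) :=
  monotone_nat_of_le_succ fun e => by
    have h1 := aseq_le P1 P2 e
    rcases aseq_step P1 P2 e with h | h <;> simp only [h] <;> omega

lemma aseq_opt {P1 P2 : ℕ → ℕ} (hc1 : Conc P1) (hc2 : Conc P2) (e : ℕ) :
    P1 (aseq P1 P2 e) + P2 (e - aseq P1 P2 e) = maxconv P1 P2 e := by
  induction e with
  | zero => rw [aseq_zero, maxconv_zero]
  | succ e ih =>
    set a := aseq P1 P2 e with ha
    have ha_le : a ≤ e := aseq_le P1 P2 e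
    have hmax : ∀ a' ≤ e + 1, P1 a' + P2 (e + 1 - a') ≤
        max (P1 (a + 1) + P2 (e - a)) (P1 a + P2 (e + 1 - a)) := by
      intro a' ha'
      rcases le_or_gt a' a with hle | hlt
      · have hb := le_maxconv P1 P2 (show a' ≤ e by omega)
        rw [← ih] at hb
        have hconc := hc2 (e - a) (e - a') (by omega)
        have r1 : e - a' + 1 = e + 1 - a' := by omega
        have r2 : e - a + 1 = e + 1 - a := by omega
        rw [r1, r2] at hconc
        refine le_trans ?_ (le_max_right _ _)
        omega
      · have hb := le_maxconv P1 P2 (show a' - 1 ≤ e by omega)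
        rw [← ih] at hb
        have r0 : e - (a' - 1) = e + 1 - a' := by omega
        rw [r0] at hb
        have hconc := hc1 a (a' - 1) (by omega)
        have r1 : a' - 1 + 1 = a' := by omega
        rw [r1] at hconc
        refine le_trans ?_ (le_max_left _ _)
        omega
    have hmem1 : P1 (a + 1) + P2 (e - a) ≤ maxconv P1 P2 (e + 1) := by
      have := le_maxconv P1 P2 (show a + 1 ≤ e + 1 by omega)
      have r : e + 1 - (a + 1) = e - a := by omega
      rwa [r] at this
    have hmem2 : P1 a + P2 (e + 1 - a) ≤ maxconv P1 P2 (e + 1) :=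
      le_maxconv P1 P2 (show a ≤ e + 1 by omega)
    have hmp : maxconv P1 P2 (e + 1) =
        max (P1 (a + 1) + P2 (e - a)) (P1 a + P2 (e + 1 - a)) :=
      le_antisymm (maxconv_le hmax) (max_le hmem1 hmem2)
    rw [aseq_succ, ← ha]
    split_ifs with hif
    · have r : e + 1 - (a + 1) = e - a := by omega
      rw [r, hmp]
      exact (max_eq_left hif).symm
    · rw [hmp]
      exact (max_eq_right (by omega)).symm

/-- the greedy family realizing `maxconv` partial sums in a skew append -/
lemma skew_fam {w1 w2 : List ℕ}
    (h1 : Good w1) (h2 : Good w2) (d : ℕ) :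
    ∃ v : Fin d → Finset (Fin (w1 ++ w2).length),
      (∀ i, WkInc (w1 ++ w2) (v i)) ∧ (∀ i j, i ≠ j → Disjoint (v i) (v j)) ∧
      ∀ e (he : e ≤ d), ∑ i : Fin e, (v (Fin.castLE he i)).card =
        maxconv (greene w1) (greene w2) e := by
  classical
  obtain ⟨u1, hW1, hD1, hs1⟩ := h1.2 d
  obtain ⟨u2, hW2, hD2, hs2⟩ := h2.2 d
  set P1 := greene w1 with hP1
  set P2 := greene w2 with hP2
  set A := aseq P1 P2 with hA
  have hAle : ∀ e, A e ≤ e := aseq_le P1 P2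
  refine ⟨fun i => if A ((i : ℕ) + 1) = A (i : ℕ) + 1 then
      (u1 ⟨A (i : ℕ), by have := hAle (i : ℕ); have := i.isLt; omega⟩).image (emb1 w1 w2)
    else
      (u2 ⟨(i : ℕ) - A (i : ℕ), by have := i.isLt; omega⟩).image (emb2 w1 w2), ?_, ?_, ?_⟩
  · intro i
    dsimp only
    split_ifs
    · exact wkInc_image1 (hW1 _)
    · exact wkInc_image2 (hW2 _)
  · have key : ∀ i j : Fin d, (i : ℕ) < (j : ℕ) → Disjoint
        (if A ((i : ℕ) + 1) = A (i : ℕ) + 1 then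
          (u1 ⟨A (i : ℕ), by have := hAle (i : ℕ); have := i.isLt; omega⟩).image (emb1 w1 w2)
        else (u2 ⟨(i : ℕ) - A (i : ℕ), by have := i.isLt; omega⟩).image (emb2 w1 w2))
        (if A ((j : ℕ) + 1) = A (j : ℕ) + 1 then
          (u1 ⟨A (j : ℕ), by have := hAle (j : ℕ); have := j.isLt; omega⟩).image (emb1 w1 w2)
        else (u2 ⟨(j : ℕ) - A (j : ℕ), by have := j.isLt; omega⟩).image (emb2 w1 w2)) := by
      intro i j hij
      split_ifs with hi hj hj
      · apply disjoint_image1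
        apply hD1
        have hm : A ((i : ℕ) + 1) ≤ A (j : ℕ) := aseq_mono P1 P2 (by omega)
        intro hcon
        rw [Fin.ext_iff] at hcon
        simp only at hcon
        omega
      · exact disjoint_image12 _ _
      · exact (disjoint_image12 _ _).symm
      · apply disjoint_image2
        apply hD2
        have hstep : A ((i : ℕ) + 1) = A (i : ℕ) :=
          (aseq_step P1 P2 (i : ℕ)).resolve_left hi
        have hm : ((i : ℕ) + 1) - A ((i : ℕ) + 1) ≤ (j : ℕ) - A (j : ℕ) :=
          bseq_mono P1 P2 (by omega : (i : ℕ) + 1 ≤ (j : ℕ))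
        have hAi := hAle (i : ℕ)
        intro hcon
        rw [Fin.ext_iff] at hcon
        simp only at hcon
        omega
    intro i j hij
    rcases lt_trichotomy (i : ℕ) (j : ℕ) with h | h | h
    · exact key i j h
    · exact absurd (Fin.ext h) hij
    · exact (key j i h).symm
  · intro e he
    induction e with
    | zero => simp [maxconv_zero, hP1, hP2, greene_zero]
    | succ e ihe =>
      have he' : e ≤ d := by omega
      rw [Fin.sum_univ_castSucc]
      have hcongr : ∀ i : Fin e, (Fin.castLE he i.castSucc) = Fin.castLE he' i :=
        fun i => Fin.ext rfl
      rw [Finset.sum_congr rfl (fun i _ => by rw [hcongr i]), ihe he']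
      have hlast : (Fin.castLE he (Fin.last e)) = ⟨e, by omega⟩ := Fin.ext rfl
      rw [hlast]
      dsimp only
      have hopte := aseq_opt h1.1 h2.1 e
      have hopte1 := aseq_opt h1.1 h2.1 (e + 1)
      rw [← hA, ← hP1, ← hP2] at hopte hopte1
      by_cases hstep : A (e + 1) = A e + 1
      · rw [if_pos (by exact hstep)]
        rw [Finset.card_image_of_injective _ (emb1_inj w1 w2)]
        have hAd : A e < d := by have := hAle e; omega
        have hcard : (u1 ⟨A e, hAd⟩).card + greene w1 (A e) = greene w1 (A e + 1) :=
          goodfam_card ⟨hW1, hD1, hs1⟩ ⟨A e, hAd⟩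
        rw [← hP1] at hcard
        rw [hstep] at hopte1
        have r : e + 1 - (A e + 1) = e - A e := by have := hAle e; omega
        rw [r] at hopte1
        omega
      · rw [if_neg (by exact hstep)]
        rw [Finset.card_image_of_injective _ (emb2_inj w1 w2)]
        have hstep' : A (e + 1) = A e := (aseq_step P1 P2 e).resolve_left hstep
        have hBd : e - A e < d := by omega
        have hcard : (u2 ⟨e - A e, hBd⟩).card + greene w2 (e - A e) =
            greene w2 (e - A e + 1) := goodfam_card ⟨hW2, hD2, hs2⟩ ⟨e - A e, hBd⟩
        rw [← hP2] at hcard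
        rw [hstep'] at hopte1
        have r : e + 1 - A e = e - A e + 1 := by have := hAle e; omega
        rw [r] at hopte1
        omega

lemma good_append_skew {w1 w2 : List ℕ}
    (hcross : ∀ (i : Fin w1.length) (j : Fin w2.length), w2.get j < w1.get i)
    (h1 : Good w1) (h2 : Good w2) : Good (w1 ++ w2) := by
  have greq : ∀ e, greene (w1 ++ w2) e = maxconv (greene w1) (greene w2) e := by
    intro e
    refine le_antisymm (greene_app_skew_le hcross e) ?_
    obtain ⟨v, hW, hD, hs⟩ := skew_fam h1 h2 e
    apply le_greene_of_mem
    refine ⟨v, hW, hD, ?_⟩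
    rw [← hs e le_rfl]
    exact Finset.sum_congr rfl fun i _ => by rw [castLE_rfl]
  constructor
  · intro k l hkl
    have := conc_maxconv h1.1 h2.1 k l hkl
    rw [← greq, ← greq, ← greq, ← greq] at this
    exact this
  · intro d
    obtain ⟨v, hW, hD, hs⟩ := skew_fam h1 h2 d
    refine ⟨v, hW, hD, fun e he => ?_⟩
    rw [greq e]
    exact hs e he



section Graph

variable {α : Type*} [DecidableEq α]

abbrev ROn (A : α → α → Prop) (s : Finset α) (x y : α) : Prop :=
  Relation.ReflTransGen (fun a b => a ∈ s ∧ b ∈ s ∧ A a b) x y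

def CoA (A : α → α → Prop) : α → α → Prop := fun a b => a ≠ b ∧ ¬ A a b

def IsP4 (A : α → α → Prop) (a b c d : α) : Prop :=
  a ≠ b ∧ a ≠ c ∧ a ≠ d ∧ b ≠ c ∧ b ≠ d ∧ c ≠ d ∧
  A a b ∧ A b c ∧ A c d ∧ ¬ A a c ∧ ¬ A a d ∧ ¬ A b d

variable {A : α → α → Prop}

lemma ROn_symm (hs : ∀ x y, A x y → A y x) {s : Finset α} {x y : α}
    (h : ROn A s x y) : ROn A s y x :=
  haveI : Std.Symm (fun a b : α => a ∈ s ∧ b ∈ s ∧ A a b) :=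
    ⟨fun a b hab => ⟨hab.2.1, hab.1, hs a b hab.2.2⟩⟩
  Relation.ReflTransGen.symmetric.symm _ _ h

lemma first_step {s : Finset α} {v u : α} (h : ROn A s v u) (hne : u ≠ v) :
    ∃ z, z ∈ s ∧ A v z := by
  rcases Relation.ReflTransGen.cases_head h with rfl | ⟨c, hc, _⟩
  · exact absurd rfl hne
  · exact ⟨c, hc.2.1, hc.2.2⟩

lemma reach_erase {s : Finset α} {v u : α} (hR : ROn A s v u) :
    u ∈ s → u ≠ v → ∃ z, z ∈ s.erase v ∧ A v z ∧ ROn A (s.erase v) z u := by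
  induction hR with
  | refl => intro _ hne; exact absurd rfl hne
  | @tail b c hab hbc ih =>
    intro hc hcne
    by_cases hb : b = v
    · subst hb
      exact ⟨c, Finset.mem_erase.mpr ⟨hcne, hbc.2.1⟩, hbc.2.2, Relation.ReflTransGen.refl⟩
    · obtain ⟨z, hz, hvz, hwalk⟩ := ih hbc.1 hb
      exact ⟨z, hz, hvz, hwalk.tail
        ⟨Finset.mem_erase.mpr ⟨hb, hbc.1⟩, Finset.mem_erase.mpr ⟨hcne, hbc.2.1⟩, hbc.2.2⟩⟩

lemma boundary {s' : Finset α} {v y0 x : α} (hR : ROn A s' y0 x) :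
    A v y0 → ¬ A v x → ∃ y x', y ∈ s' ∧ x' ∈ s' ∧ A v y ∧ ¬ A v x' ∧ A y x' ∧
      ROn A s' x' x := by
  induction hR with
  | refl => intro h0 hx; exact absurd h0 hx
  | @tail b c hab hbc ih =>
    intro h0 hxc
    by_cases hb : A v b
    · exact ⟨b, c, hbc.1, hbc.2.1, hb, hxc, hbc.2.2, Relation.ReflTransGen.refl⟩
    · obtain ⟨y, x', h1, h2, h3, h4, h5, h6⟩ := ih h0 hb
      exact ⟨y, x', h1, h2, h3, h4, h5, h6.tail hbc⟩

lemma seinsche_step (hs : ∀ x y, A x y → A y x) (hirr : ∀ x, ¬ A x x)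
    (s : Finset α) (v : α) (hv : v ∈ s)
    (hG : ∀ x ∈ s, ∀ y ∈ s, ROn A s x y)
    (hC : ∀ x ∈ s, ∀ y ∈ s, ROn (CoA A) s x y)
    (p q : α) (hp : p ∈ s.erase v) (hq : q ∈ s.erase v)
    (hpq : ¬ ROn A (s.erase v) p q) : ∃ a b c d, IsP4 A a b c d := by
  obtain ⟨hpne, hps⟩ := Finset.mem_erase.mp hp
  obtain ⟨hqne, hqs⟩ := Finset.mem_erase.mp hq
  -- v has a non-neighbor in s.erase v
  have hexn : ∃ x, x ∈ s.erase v ∧ ¬ A v x := by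
    by_contra hall
    push_neg at hall
    obtain ⟨z, hz, hvz⟩ := first_step (hC v hv p hps) hpne
    have hzv : z ≠ v := fun h => hvz.1 h.symm
    exact hvz.2 (hall z (Finset.mem_erase.mpr ⟨hzv, hz⟩))
  obtain ⟨x, hx', hvx⟩ := hexn
  obtain ⟨hxv, hxs⟩ := Finset.mem_erase.mp hx'
  obtain ⟨z0, hz0, hvz0, hwalk⟩ := reach_erase (hG v hv x hxs) hxs hxv
  obtain ⟨y, x', hy, hx'', hvy, hvx', hyx', hx'x⟩ := boundary hwalk hvz0 hvx
  -- a vertex not reachable from x in s.erase v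
  have hr : ¬ ROn A (s.erase v) x p ∨ ¬ ROn A (s.erase v) x q := by
    by_contra hc
    push_neg at hc
    exact hpq (Relation.ReflTransGen.trans (ROn_symm hs hc.1) hc.2)
  obtain ⟨r0, hr0, hnr⟩ : ∃ r0, r0 ∈ s.erase v ∧ ¬ ROn A (s.erase v) x r0 := by
    rcases hr with h | h
    · exact ⟨p, hp, h⟩
    · exact ⟨q, hq, h⟩
  obtain ⟨hr0ne, hr0s⟩ := Finset.mem_erase.mp hr0
  obtain ⟨z, hz, hvz, hzwalk⟩ := reach_erase (hG v hv r0 hr0s) hr0s hr0ne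
  have hxx' : ROn A (s.erase v) x x' := ROn_symm hs hx'x
  have hxy : ROn A (s.erase v) x y :=
    ROn_symm hs (Relation.ReflTransGen.head ⟨hy, hx'', hyx'⟩ hx'x)
  have hne_x'z : x' ≠ z := fun h => hnr (Relation.ReflTransGen.trans hxx' (h ▸ hzwalk))
  have hnA_x'z : ¬ A x' z := fun h => hnr (Relation.ReflTransGen.trans
    (hxx'.tail ⟨hx'', hz, h⟩) hzwalk)
  have hne_yz : y ≠ z := fun h => hnr (Relation.ReflTransGen.trans hxy (h ▸ hzwalk))
  have hnA_yz : ¬ A y z := fun h => hnr (Relation.ReflTransGen.trans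
    (hxy.tail ⟨hy, hz, h⟩) hzwalk)
  refine ⟨x', y, v, z, ?_, ?_, ?_, ?_, ?_, ?_, ?_, ?_, ?_, ?_, ?_, ?_⟩
  · intro h; rw [h] at hyx'; exact hirr y hyx'
  · exact (Finset.mem_erase.mp hx'').1
  · exact hne_x'z
  · exact fun h => (Finset.mem_erase.mp hy).1 h
  · exact hne_yz
  · exact fun h => (Finset.mem_erase.mp hz).1 h.symm
  · exact hs _ _ hyx'
  · exact hs _ _ hvy
  · exact hvz
  · exact fun h => hvx' (hs _ _ h)
  · exact hnA_x'z
  · exact hnA_yz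

lemma coA_symm (hs : ∀ x y, A x y → A y x) : ∀ x y, CoA A x y → CoA A y x :=
  fun _ _ h => ⟨h.1.symm, fun hA => h.2 (hs _ _ hA)⟩

lemma coA_irr : ∀ x, ¬ CoA A x x := fun _ h => h.1 rfl

lemma ROn_co_co (hirr : ∀ x, ¬ A x x) {s : Finset α} {x y : α}
    (h : ROn A s x y) : ROn (CoA (CoA A)) s x y :=
  Relation.ReflTransGen.mono (fun a b (hab : a ∈ s ∧ b ∈ s ∧ A a b) =>
    (⟨hab.1, hab.2.1, ⟨fun he => by subst he; exact hirr a hab.2.2, fun hn => hn.2 hab.2.2⟩⟩ :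
      a ∈ s ∧ b ∈ s ∧ CoA (CoA A) a b)) _ _ h

lemma isP4_compl (hs : ∀ x y, A x y → A y x) {a b c d : α}
    (h : IsP4 (CoA A) a b c d) : IsP4 A c a d b := by
  obtain ⟨nab, nac, nad, nbc, nbd, ncd, eab, ebc, ecd, nAac, nAad, nAbd⟩ := h
  have hac : A a c := by by_contra hcon; exact nAac ⟨nac, hcon⟩
  have had : A a d := by by_contra hcon; exact nAad ⟨nad, hcon⟩
  have hbd : A b d := by by_contra hcon; exact nAbd ⟨nbd, hcon⟩
  exact ⟨nac.symm, ncd, fun h => nbc h.symm, nad, nab, fun h => nbd h.symm,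
    hs _ _ hac, had, hs _ _ hbd, ecd.2, fun h => ebc.2 (hs _ _ h), eab.2⟩

lemma seinsche (hs : ∀ x y, A x y → A y x) (hirr : ∀ x, ¬ A x x) (s : Finset α) :
    2 ≤ s.card → (∀ x ∈ s, ∀ y ∈ s, ROn A s x y) → (∀ x ∈ s, ∀ y ∈ s, ROn (CoA A) s x y) →
    ∃ a b c d, IsP4 A a b c d := by
  induction s using Finset.strongInduction with
  | _ s ih =>
    intro hcard hG hC
    rcases Nat.lt_or_ge s.card 3 with h3 | h3
    · -- exactly two vertices: impossible to have both connected
      exfalso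
      have h2 : s.card = 2 := by omega
      obtain ⟨u, v, huv, rfl⟩ := Finset.card_eq_two.mp h2
      have hu : u ∈ ({u, v} : Finset α) := Finset.mem_insert_self u {v}
      have hv : v ∈ ({u, v} : Finset α) := Finset.mem_insert_of_mem (Finset.mem_singleton_self v)
      by_cases hA : A u v
      · obtain ⟨z, hz, hvz⟩ := first_step (hC u hu v hv) (Ne.symm huv)
        rcases Finset.mem_insert.mp hz with h | h
        · exact hvz.1 h.symm
        · rw [Finset.mem_singleton] at h
          rw [h] at hvz
          exact hvz.2 hA
      · obtain ⟨z, hz, hvz⟩ := first_step (hG u hu v hv) (Ne.symm huv)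
        rcases Finset.mem_insert.mp hz with h | h
        · rw [h] at hvz
          exact hirr u hvz
        · rw [Finset.mem_singleton] at h
          rw [h] at hvz
          exact hA hvz
    · obtain ⟨v, hv⟩ := Finset.card_pos.mp (show 0 < s.card by omega)
      have hsub : s.erase v ⊂ s := Finset.erase_ssubset hv
      have hcs' : (s.erase v).card = s.card - 1 := Finset.card_erase_of_mem hv
      by_cases hG' : ∀ x ∈ s.erase v, ∀ y ∈ s.erase v, ROn A (s.erase v) x y
      · by_cases hC' : ∀ x ∈ s.erase v, ∀ y ∈ s.erase v, ROn (CoA A) (s.erase v) x y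
        · exact ih (s.erase v) hsub (by omega) hG' hC'
        · push_neg at hC'
          obtain ⟨p, hp, q, hq, hpq⟩ := hC'
          obtain ⟨a, b, c, d, h4⟩ := seinsche_step (coA_symm hs) coA_irr s v hv hC
            (fun x hx y hy => ROn_co_co hirr (hG x hx y hy)) p q hp hq hpq
          exact ⟨c, a, d, b, isP4_compl hs h4⟩
      · push_neg at hG'
        obtain ⟨p, hp, q, hq, hpq⟩ := hG'
        exact seinsche_step hs hirr s v hv hG hC p q hp hq hpq

end Graph

section Split

variable {m : ℕ} {A : Fin m → Fin m → Prop}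

lemma down_closed (hs : ∀ x y, A x y → A y x)
    (hstr : ∀ i j k : Fin m, i < j → j < k → A i k → A i j ∨ A j k)
    (z : Fin m) (hz : ∀ i : Fin m, z ≤ i) :
    ∀ j, ROn A Finset.univ z j → ∀ i, i ≤ j → ROn A Finset.univ z i := by
  intro j hR
  induction hR with
  | refl =>
    intro i hij
    have : i = z := le_antisymm hij (hz i)
    subst this
    exact Relation.ReflTransGen.refl
  | @tail b c hab hbc ih =>
    intro i hic
    by_cases hib : i ≤ b
    · exact ih i hib
    · push_neg at hib
      rcases lt_or_eq_of_le hic with hic' | rfl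
      · rcases hstr b i c hib hic' hbc.2.2 with h | h
        · exact hab.tail ⟨Finset.mem_univ _, Finset.mem_univ _, h⟩
        · exact (hab.tail hbc).tail ⟨Finset.mem_univ _, Finset.mem_univ _, hs _ _ h⟩
      · exact hab.tail hbc

lemma split_of_disconnected (hs : ∀ x y, A x y → A y x)
    (hstr : ∀ i j k : Fin m, i < j → j < k → A i k → A i j ∨ A j k)
    (hm : 0 < m) (u u' : Fin m) (hdis : ¬ ROn A Finset.univ u u') :
    ∃ k, 0 < k ∧ k < m ∧ ∀ i j : Fin m, (i : ℕ) < k → k ≤ (j : ℕ) → ¬ A i j := by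
  classical
  set z : Fin m := ⟨0, hm⟩ with hzdef
  have hz : ∀ i : Fin m, z ≤ i := fun i => by
    rw [Fin.le_def]; exact Nat.zero_le _
  set F := Finset.univ.filter (fun i : Fin m => ¬ ROn A Finset.univ z i) with hFdef
  have hF : F.Nonempty := by
    by_contra h
    rw [Finset.not_nonempty_iff_eq_empty] at h
    have hall : ∀ i, ROn A Finset.univ z i := by
      intro i
      by_contra hn
      exact Finset.eq_empty_iff_forall_notMem.mp h i
        (Finset.mem_filter.mpr ⟨Finset.mem_univ _, hn⟩)
    exact hdis (Relation.ReflTransGen.trans (ROn_symm hs (hall u)) (hall u'))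
  set k0 := F.min' hF with hk0def
  have hk0F : k0 ∈ F := F.min'_mem hF
  have hk0 : ¬ ROn A Finset.univ z k0 := (Finset.mem_filter.mp hk0F).2
  have hkpos : 0 < (k0 : ℕ) := by
    rcases Nat.eq_zero_or_pos (k0 : ℕ) with h0 | h0
    · exfalso
      have : k0 = z := Fin.ext (by rw [h0])
      rw [this] at hk0
      exact hk0 Relation.ReflTransGen.refl
    · exact h0
  refine ⟨(k0 : ℕ), hkpos, k0.isLt, ?_⟩
  intro i j hi hj hA
  have hri : ROn A Finset.univ z i := by
    by_contra hn
    have hmem : i ∈ F := Finset.mem_filter.mpr ⟨Finset.mem_univ _, hn⟩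
    have := F.min'_le i hmem
    rw [← hk0def] at this
    rw [Fin.le_def] at this
    omega
  have hrj : ROn A Finset.univ z j := hri.tail ⟨Finset.mem_univ _, Finset.mem_univ _, hA⟩
  exact hk0 (down_closed hs hstr z hz j hrj k0 (by rw [Fin.le_def]; exact hj))

end Split


section Word

variable {w : List ℕ}

def invRel (w : List ℕ) : Fin w.length → Fin w.length → Prop :=
  fun p q => (p < q ∧ w.get q < w.get p) ∨ (q < p ∧ w.get p < w.get q)

lemma invRel_symm : ∀ p q, invRel w p q → invRel w q p := by
  rintro p q (h | h)
  · exact Or.inr h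
  · exact Or.inl h

lemma invRel_irr : ∀ p, ¬ invRel w p p := by
  rintro p (⟨h, _⟩ | ⟨h, _⟩) <;> exact lt_irrefl _ h

lemma get_ne (hnd : w.Nodup) {p q : Fin w.length} (h : p ≠ q) : w.get p ≠ w.get q :=
  fun he => h ((List.Nodup.get_inj_iff hnd).mp he)

lemma invRel_straddle (hnd : w.Nodup) :
    ∀ i j k : Fin w.length, i < j → j < k → invRel w i k → invRel w i j ∨ invRel w j k := by
  intro i j k hij hjk hik
  by_contra hcon
  push_neg at hcon
  have e1 : w.get i < w.get j :=
    lt_of_le_of_ne (not_lt.mp fun h => hcon.1 (Or.inl ⟨hij, h⟩)) (get_ne hnd (ne_of_lt hij))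
  have e2 : w.get j < w.get k :=
    lt_of_le_of_ne (not_lt.mp fun h => hcon.2 (Or.inl ⟨hjk, h⟩)) (get_ne hnd (ne_of_lt hjk))
  rcases hik with ⟨_, hh⟩ | ⟨hh, _⟩
  · exact absurd (e1.trans e2) (not_lt.mpr hh.le)
  · exact absurd hh (not_lt.mpr (le_of_lt (hij.trans hjk)))

lemma coInvRel_straddle (hnd : w.Nodup) :
    ∀ i j k : Fin w.length, i < j → j < k → CoA (invRel w) i k →
      CoA (invRel w) i j ∨ CoA (invRel w) j k := by
  intro i j k hij hjk hik
  by_contra hcon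
  push_neg at hcon
  have hik' : i < k := hij.trans hjk
  have e1 : w.get j < w.get i := by
    rcases not_not.mp (fun h => (hcon.1 ⟨ne_of_lt hij, h⟩ : False)) with ⟨_, h⟩ | ⟨h, _⟩
    · exact h
    · exact absurd h (not_lt.mpr hij.le)
  have e2 : w.get k < w.get j := by
    rcases not_not.mp (fun h => (hcon.2 ⟨ne_of_lt hjk, h⟩ : False)) with ⟨_, h⟩ | ⟨h, _⟩
    · exact h
    · exact absurd h (not_lt.mpr hjk.le)
  exact hik.2 (Or.inl ⟨hik', e2.trans e1⟩)

abbrev AdjP (π : Equiv.Perm (Fin 4)) (x y : Fin 4) : Prop :=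
  (x < y ∧ π y < π x) ∨ (y < x ∧ π x < π y)

set_option maxRecDepth 10000 in
lemma p4_perm_decide : ∀ (π g : Equiv.Perm (Fin 4)),
    (AdjP π (g 0) (g 1) ∧ AdjP π (g 1) (g 2) ∧ AdjP π (g 2) (g 3) ∧
     ¬AdjP π (g 0) (g 2) ∧ ¬AdjP π (g 0) (g 3) ∧ ¬AdjP π (g 1) (g 3)) →
    π = p3142 ∨ π = p2413 := by decide

lemma p4_pattern (hnd : w.Nodup) {a b c d : Fin w.length}
    (h : IsP4 (invRel w) a b c d) :
    ContainsPattern p3142 w ∨ ContainsPattern p2413 w := by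
  classical
  obtain ⟨nab, nac, nad, nbc, nbd, ncd, eab, ebc, ecd, fac, fad, fbd⟩ := h
  have hqinj : Function.Injective (![a, b, c, d] : Fin 4 → Fin w.length) := by
    intro i j hij
    fin_cases i <;> fin_cases j <;> simp_all
  -- the sorted quadruple
  set s : Finset (Fin w.length) := {a, b, c, d} with hs
  have hcard : s.card = 4 := by
    rw [hs, Finset.card_insert_of_notMem (by simp [nab, nac, nad]),
      Finset.card_insert_of_notMem (by simp [nbc, nbd]),
      Finset.card_insert_of_notMem (by simp [ncd]), Finset.card_singleton]
  set iso := s.orderIsoOfFin hcard with hiso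
  set F : Fin 4 → Fin w.length := fun i => (iso i : Fin w.length) with hF
  have hFmono : StrictMono F := fun i j hij => iso.strictMono hij
  have hFinj := hFmono.injective
  have hmemq : ∀ i : Fin 4, (![a, b, c, d] : Fin 4 → Fin w.length) i ∈ s := by
    intro i; fin_cases i <;> simp [hs]
  set g : Fin 4 → Fin 4 := fun i => iso.symm ⟨(![a, b, c, d] : Fin 4 → Fin w.length) i, hmemq i⟩
    with hg
  have hFg : ∀ i, F (g i) = (![a, b, c, d] : Fin 4 → Fin w.length) i := fun i => by
    rw [hF, hg]
    simp
  have hginj : Function.Injective g := fun i j hij => hqinj (by rw [← hFg i, ← hFg j, hij])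
  set ge : Equiv.Perm (Fin 4) :=
    Equiv.ofBijective g (Finite.injective_iff_bijective.mp hginj) with hge
  -- the rank pattern
  set v : Fin 4 → ℕ := fun i => w.get (F i) with hv
  have hvinj : Function.Injective v := fun i j hij =>
    hFinj ((List.Nodup.get_inj_iff hnd).mp hij)
  set t : Finset ℕ := Finset.univ.image v with ht
  have htcard : t.card = 4 := by
    rw [ht, Finset.card_image_of_injective _ hvinj]; simp
  set iso2 := t.orderIsoOfFin htcard with hiso2
  have hmemv : ∀ i, v i ∈ t := fun i => by
    rw [ht]; exact Finset.mem_image_of_mem v (Finset.mem_univ i)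
  set π : Fin 4 → Fin 4 := fun i => iso2.symm ⟨v i, hmemv i⟩ with hπ
  have hrank : ∀ x y, v x < v y ↔ π x < π y := by
    intro x y
    rw [hπ]
    constructor
    · intro h
      exact iso2.symm.strictMono (show (⟨v x, hmemv x⟩ : {z // z ∈ t}) < ⟨v y, hmemv y⟩ from h)
    · intro h
      have := iso2.strictMono h
      rw [OrderIso.apply_symm_apply, OrderIso.apply_symm_apply] at this
      exact this
  have hπinj : Function.Injective π := by
    intro x y hxy
    rw [hπ] at hxy
    have := iso2.symm.injective hxy
    exact hvinj (congrArg Subtype.val this)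
  set πe : Equiv.Perm (Fin 4) :=
    Equiv.ofBijective π (Finite.injective_iff_bijective.mp hπinj) with hπe
  have hcontain : ContainsPattern πe w := by
    refine ⟨F, hFmono, fun j k => ⟨?_, ?_⟩⟩
    · exact hrank j k
    · exact hrank k j
  -- adjacency transfer
  have htrans : ∀ x y : Fin 4, invRel w (F x) (F y) ↔ AdjP πe x y := by
    intro x y
    constructor
    · rintro (⟨h1, h2⟩ | ⟨h1, h2⟩)
      · exact Or.inl ⟨hFmono.lt_iff_lt.mp h1, (hrank y x).mp h2⟩
      · exact Or.inr ⟨hFmono.lt_iff_lt.mp h1, (hrank x y).mp h2⟩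
    · rintro (⟨h1, h2⟩ | ⟨h1, h2⟩)
      · exact Or.inl ⟨hFmono h1, (hrank y x).mpr h2⟩
      · exact Or.inr ⟨hFmono h1, (hrank x y).mpr h2⟩
  have hFg' : ∀ i : Fin 4, F (ge i) = (![a, b, c, d] : Fin 4 → Fin w.length) i :=
    fun i => hFg i
  have key := p4_perm_decide πe ge
  have e01 : AdjP πe (ge 0) (ge 1) := (htrans _ _).mp (by rw [hFg' 0, hFg' 1]; exact eab)
  have e12 : AdjP πe (ge 1) (ge 2) := (htrans _ _).mp (by rw [hFg' 1, hFg' 2]; exact ebc)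
  have e23 : AdjP πe (ge 2) (ge 3) := (htrans _ _).mp (by rw [hFg' 2, hFg' 3]; exact ecd)
  have f02 : ¬ AdjP πe (ge 0) (ge 2) := fun h => fac (by
    have := (htrans (ge 0) (ge 2)).mpr h
    rwa [hFg' 0, hFg' 2] at this)
  have f03 : ¬ AdjP πe (ge 0) (ge 3) := fun h => fad (by
    have := (htrans (ge 0) (ge 3)).mpr h
    rwa [hFg' 0, hFg' 3] at this)
  have f13 : ¬ AdjP πe (ge 1) (ge 3) := fun h => fbd (by
    have := (htrans (ge 1) (ge 3)).mpr h
    rwa [hFg' 1, hFg' 3] at this)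
  rcases key ⟨e01, e12, e23, f02, f03, f13⟩ with h | h
  · left; rwa [h] at hcontain
  · right; rwa [h] at hcontain

end Word


lemma decompose {w : List ℕ} (hnd : w.Nodup) (hlen : 2 ≤ w.length)
    (h1 : ¬ ContainsPattern p3142 w) (h2 : ¬ ContainsPattern p2413 w) :
    ∃ k, 0 < k ∧ k < w.length ∧
      ((∀ i j : Fin w.length, (i : ℕ) < k → k ≤ (j : ℕ) → w.get i < w.get j) ∨
       (∀ i j : Fin w.length, (i : ℕ) < k → k ≤ (j : ℕ) → w.get j < w.get i)) := by
  classical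
  have hm : 0 < w.length := by omega
  have hnoP4 : ∀ a b c d : Fin w.length, ¬ IsP4 (invRel w) a b c d := by
    intro a b c d h4
    rcases p4_pattern hnd h4 with h | h
    exacts [h1 h, h2 h]
  have hcard : 2 ≤ (Finset.univ : Finset (Fin w.length)).card := by
    simpa using hlen
  by_cases hG : ∀ x ∈ (Finset.univ : Finset (Fin w.length)), ∀ y ∈ Finset.univ,
      ROn (invRel w) Finset.univ x y
  · by_cases hC : ∀ x ∈ (Finset.univ : Finset (Fin w.length)), ∀ y ∈ Finset.univ,
        ROn (CoA (invRel w)) Finset.univ x y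
    · exfalso
      obtain ⟨a, b, c, d, h4⟩ := seinsche invRel_symm invRel_irr Finset.univ hcard hG hC
      exact hnoP4 a b c d h4
    · push_neg at hC
      obtain ⟨u, -, u', -, hdis⟩ := hC
      obtain ⟨k, hk0, hkm, hcross⟩ := split_of_disconnected (coA_symm invRel_symm)
        (coInvRel_straddle hnd) hm u u' hdis
      refine ⟨k, hk0, hkm, Or.inr ?_⟩
      intro i j hi hj
      have hij : i < j := by rw [Fin.lt_def]; omega
      have hne : i ≠ j := ne_of_lt hij
      have hinv : invRel w i j := not_not.mp (fun hn => hcross i j hi hj ⟨hne, hn⟩)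
      rcases hinv with ⟨_, h⟩ | ⟨h, _⟩
      · exact h
      · exact absurd h (not_lt.mpr hij.le)
  · push_neg at hG
    obtain ⟨u, -, u', -, hdis⟩ := hG
    obtain ⟨k, hk0, hkm, hcross⟩ := split_of_disconnected invRel_symm
      (invRel_straddle hnd) hm u u' hdis
    refine ⟨k, hk0, hkm, Or.inl ?_⟩
    intro i j hi hj
    have hij : i < j := by rw [Fin.lt_def]; omega
    have hle : w.get i ≤ w.get j :=
      not_lt.mp (fun h => hcross i j hi hj (Or.inl ⟨hij, h⟩))
    exact lt_of_le_of_ne hle (get_ne hnd (ne_of_lt hij))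

lemma contains_of_left {π : Equiv.Perm (Fin 4)} {w1 w2 : List ℕ}
    (h : ContainsPattern π w1) : ContainsPattern π (w1 ++ w2) := by
  obtain ⟨f, hmono, hf⟩ := h
  refine ⟨fun i => emb1 w1 w2 (f i), fun i j hij => hmono hij, ?_⟩
  intro j k
  constructor
  · rw [get_emb1, get_emb1]
    exact (hf j k).1
  · rw [get_emb1, get_emb1]
    exact (hf j k).2

lemma contains_of_right {π : Equiv.Perm (Fin 4)} {w1 w2 : List ℕ}
    (h : ContainsPattern π w2) : ContainsPattern π (w1 ++ w2) := by
  obtain ⟨f, hmono, hf⟩ := h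
  refine ⟨fun i => emb2 w1 w2 (f i), ?_, ?_⟩
  · intro i j hij
    have h' := hmono hij
    rw [Fin.lt_def] at h' ⊢
    simp only [emb2]
    omega
  · intro j k
    constructor
    · rw [get_emb2, get_emb2]
      exact (hf j k).1
    · rw [get_emb2, get_emb2]
      exact (hf j k).2

lemma main_good : ∀ (N : ℕ) (w : List ℕ), w.length ≤ N → w.Nodup →
    ¬ ContainsPattern p3142 w → ¬ ContainsPattern p2413 w → Good w := by
  intro N
  induction N with
  | zero =>
    intro w hw _ _ _
    have : w = [] := List.length_eq_zero_iff.mp (by omega)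
    rw [this]
    exact good_nil
  | succ N ih =>
    intro w hw hnd h1 h2
    rcases Nat.lt_or_ge w.length 2 with hlt | hge
    · rcases Nat.lt_or_ge w.length 1 with h0 | h0
      · have : w = [] := List.length_eq_zero_iff.mp (by omega)
        rw [this]
        exact good_nil
      · obtain ⟨x, rfl⟩ := (List.length_eq_one_iff (l := w)).mp (show w.length = 1 by omega)
        exact good_single x
    · obtain ⟨k, hk0, hkm, hsplit⟩ := decompose hnd hge h1 h2
      have hw12 : w = w.take k ++ w.drop k := (List.take_append_drop k w).symm
      have hl1 : (w.take k).length = k := by rw [List.length_take]; omega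
      have hl2 : (w.drop k).length = w.length - k := List.length_drop
      have hnd' : (w.take k ++ w.drop k).Nodup := by rw [← hw12]; exact hnd
      have hnd1 : (w.take k).Nodup := hnd'.of_append_left
      have hnd2 : (w.drop k).Nodup := hnd'.of_append_right
      have ha1 : ¬ ContainsPattern p3142 (w.take k) := fun hc => h1 (by
        rw [hw12]; exact contains_of_left hc)
      have ha2 : ¬ ContainsPattern p2413 (w.take k) := fun hc => h2 (by
        rw [hw12]; exact contains_of_left hc)
      have hb1 : ¬ ContainsPattern p3142 (w.drop k) := fun hc => h1 (by
        rw [hw12]; exact contains_of_right hc)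
      have hb2 : ¬ ContainsPattern p2413 (w.drop k) := fun hc => h2 (by
        rw [hw12]; exact contains_of_right hc)
      have hg1 : Good (w.take k) := ih (w.take k) (by omega) hnd1 ha1 ha2
      have hg2 : Good (w.drop k) := ih (w.drop k) (by omega) hnd2 hb1 hb2
      have hget1 : ∀ i : Fin (w.take k).length,
          (w.take k).get i = w.get ⟨(i : ℕ), by have := i.isLt; omega⟩ := by
        intro i
        simp [List.get_eq_getElem, List.getElem_take]
      have hget2 : ∀ j : Fin (w.drop k).length,
          (w.drop k).get j = w.get ⟨k + (j : ℕ), by have := j.isLt; omega⟩ := by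
        intro j
        simp [List.get_eq_getElem, List.getElem_drop]
      rw [hw12]
      rcases hsplit with hc | hc
      · refine good_append_direct ?_ hg1 hg2
        intro i j
        rw [hget1 i, hget2 j]
        refine le_of_lt (hc _ _ ?_ ?_)
        · have := i.isLt; simp only; omega
        · simp only; omega
      · refine good_append_skew ?_ hg1 hg2
        intro i j
        rw [hget1 i, hget2 j]
        refine hc _ _ ?_ ?_
        · have := i.isLt; simp only; omega
        · simp only; omega


end Aux

/-- A separable permutation of shape `λ` has, for every `d ≥ 1`, a family of `d`
pairwise disjoint increasing subsequences whose lengths are exactly `λ₁, …, λ_d`. -/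
theorem exists_disjoint_increasing_family_of_separable {n : ℕ} (σ : Equiv.Perm (Fin n))
    (hsep : Separable σ) (d : ℕ) (hd : 1 ≤ d) :
    ∃ u : Fin d → Finset (Fin n),
      (∀ i, IncSubseq σ (u i)) ∧
      (∀ i j, i ≠ j → Disjoint (u i) (u j)) ∧
      (∀ i : Fin d, (u i).card = shapePart (permWord σ) i) := by
  classical
  obtain ⟨h3142, h2413⟩ := hsep
  have hlen : (permWord σ).length = n := by simp [permWord]
  have hnd : (permWord σ).Nodup := by
    rw [permWord]
    refine List.nodup_ofFn.mpr ?_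
    intro i j hij
    simp only at hij
    exact σ.injective (Fin.ext (by omega))
  have hgood := Aux.main_good (permWord σ).length (permWord σ) le_rfl hnd h3142 h2413
  obtain ⟨u', hW, hD, hs⟩ := hgood.2 d
  have hinj : Function.Injective (Fin.cast hlen) := Fin.cast_injective hlen
  refine ⟨fun i => (u' i).image (Fin.cast hlen), ?_, ?_, ?_⟩
  · intro i p hp q hq hpq
    simp only [Finset.mem_image] at hp hq
    obtain ⟨p', hp', rfl⟩ := hp
    obtain ⟨q', hq', rfl⟩ := hq
    have hlt : p' < q' := by
      rw [Fin.lt_def] at hpq ⊢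
      exact hpq
    have hwk := hW i p' hp' q' hq' hlt
    have hgp : (permWord σ).get p' = (σ (Fin.cast hlen p') : ℕ) + 1 :=
      List.get_ofFn (fun i : Fin n => (σ i : ℕ) + 1) p'
    have hgq : (permWord σ).get q' = (σ (Fin.cast hlen q') : ℕ) + 1 :=
      List.get_ofFn (fun i : Fin n => (σ i : ℕ) + 1) q'
    rw [hgp, hgq] at hwk
    have hne : σ (Fin.cast hlen p') ≠ σ (Fin.cast hlen q') :=
      fun h => (ne_of_lt hlt) (hinj (σ.injective h))
    rw [Fin.lt_def]
    have : (σ (Fin.cast hlen p') : ℕ) ≠ (σ (Fin.cast hlen q') : ℕ) :=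
      fun h => hne (Fin.ext h)
    omega
  · intro i j hij
    exact (Finset.disjoint_image hinj).mpr (hD i j hij)
  · intro i
    rw [Finset.card_image_of_injective _ hinj]
    have hc := Aux.goodfam_card ⟨hW, hD, hs⟩ i
    rw [shapePart]
    omega
end

section
/- Let λ be a partition of n and let T be the superstandard tableau of shape λ. Then the reading word rw(T) is a permutation of [n] that avoids the pattern 213. -/
/-- `superRW l s` is the reading word (rows left to right, bottom row first) of the
superstandard tableau whose row lengths are given by `l`, with entries shifted by
the offset `s`; row `i` (from the top) contains the consecutive integers
`s + l₁ + ⋯ + l_{i-1} + 1, …, s + l₁ + ⋯ + l_i`. -/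
def superRW : List ℕ → ℕ → List ℕ
  | [], _ => []
  | r :: rest, s => superRW rest (s + r) ++ List.range' (s + 1) r

/-- The pattern 213 (one-line notation), 0-indexed. -/
def p213 : Equiv.Perm (Fin 3) := ⟨![1,0,2], ![1,0,2], by decide, by decide⟩

lemma superRW_perm : ∀ (l : List ℕ) (s : ℕ),
    (superRW l s).Perm (List.range' (s + 1) l.sum)
  | [], s => by simp [superRW]
  | r :: rest, s => by
    have h1 : (superRW (r :: rest) s).Perm
        (List.range' (s + r + 1) rest.sum ++ List.range' (s + 1) r) :=
      (superRW_perm rest (s + r)).append_right _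
    refine h1.trans (List.perm_append_comm.trans ?_)
    have h2 : List.range' (s + 1) r ++ List.range' (s + 1 + r) rest.sum
        = List.range' (s + 1) (rest.sum + r) := by
      rw [Nat.add_comm rest.sum r]
      simpa using @List.range'_append (s + 1) r rest.sum 1
    rw [show s + r + 1 = s + 1 + r from by ring, h2]
    simp [Nat.add_comm]

lemma superRW_length (l : List ℕ) (s : ℕ) : (superRW l s).length = l.sum := by
  simpa using (superRW_perm l s).length_eq

lemma superRW_mem (l : List ℕ) (s x : ℕ) (hx : x ∈ superRW l s) :
    s < x ∧ x ≤ s + l.sum := by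
  have := (superRW_perm l s).mem_iff.mp hx
  rw [List.mem_range'_1] at this
  omega

lemma superRW_no213 : ∀ (l : List ℕ) (s i j k : ℕ)
    (hi : i < (superRW l s).length) (hj : j < (superRW l s).length)
    (hk : k < (superRW l s).length), i < j → j < k →
    (superRW l s)[j] < (superRW l s)[i] → (superRW l s)[i] < (superRW l s)[k] → False
  | [], s, i, j, k, hi, hj, hk => by simp [superRW] at hi
  | r :: rest, s, i, j, k, hi, hj, hk => by
    intro hij hjk h1 h2
    set B := superRW rest (s + r) with hB
    set A := List.range' (s + 1) r with hA
    have hw : superRW (r :: rest) s = B ++ A := rfl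
    simp only [hw] at hi hj hk h1 h2
    by_cases hkB : k < B.length
    · have hiB : i < B.length := by omega
      have hjB : j < B.length := by omega
      rw [List.getElem_append_left hjB, List.getElem_append_left hiB] at h1
      rw [List.getElem_append_left hiB, List.getElem_append_left hkB] at h2
      exact superRW_no213 rest (s + r) i j k hiB hjB hkB hij hjk h1 h2
    · push_neg at hkB
      have hkA : (B ++ A)[k] = s + 1 + (k - B.length) := by
        rw [List.getElem_append_right hkB]
        simp [hA]
      have hklt : k - B.length < r := by
        have := hk; rw [List.length_append] at this
        simp [hA] at this; omega
      have hkle : (B ++ A)[k] ≤ s + r := by omega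
      have hiA : ¬ i < B.length := by
        intro hiB
        rw [List.getElem_append_left hiB] at h2
        have := superRW_mem rest (s + r) _ (List.getElem_mem hiB)
        omega
      push_neg at hiA
      have hjA : ¬ j < B.length := by omega
      push_neg at hjA
      rw [List.getElem_append_right hiA, List.getElem_append_right hjA] at h1
      simp [hA] at h1
      omega

/-- The reading word of the superstandard tableau of shape `λ ⊢ n` is a permutation
of `[n] = {1, …, n}` avoiding the pattern 213. -/
theorem superstandard_readingWord_avoids_213 (n : ℕ) (l : List ℕ)
    (hsort : l.Pairwise (· ≥ ·)) (hpos : ∀ x ∈ l, 0 < x) (hsum : l.sum = n) :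
    (superRW l 0).Perm (List.range' 1 n) ∧ ¬ ContainsPattern p213 (superRW l 0) := by
  constructor
  · have hp := superRW_perm l 0
    rw [hsum] at hp
    simpa using hp
  · rintro ⟨f, hf, hcond⟩
    have h10 : (superRW l 0).get (f 1) < (superRW l 0).get (f 0) :=
      (hcond 1 0).1.mpr (by decide)
    have h02 : (superRW l 0).get (f 0) < (superRW l 0).get (f 2) :=
      (hcond 0 2).1.mpr (by decide)
    simp only [List.get_eq_getElem] at h10 h02
    exact superRW_no213 l 0 (f 0).val (f 1).val (f 2).val (f 0).isLt (f 1).isLt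
      (f 2).isLt (hf (by decide : (0 : Fin 3) < 1)) (hf (by decide : (1 : Fin 3) < 2)) h10 h02
end

section
/- Let B = {σ_1, …, σ_k} be a finite set of separable permutations in S_n, and let w be a supersequence of B (i.e., every σ_i is a subsequence of w). Then shape(w) contains the union of the Ferrers diagrams of shape(σ_1), …, shape(σ_k); in particular, the length of w is at least |⋃_{i=1}^k shape(σ_i)|, the number of cells in the union of these Ferrers diagrams. -/
namespace SupSeq

/-- Strictly increasing chains of a permutation inside a subset of positions. -/
def SChain {n : ℕ} (σ : Equiv.Perm (Fin n)) (C : Finset (Fin n)) : Prop :=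
  ∀ p ∈ C, ∀ q ∈ C, p < q → σ p < σ q

noncomputable def gS {n : ℕ} (σ : Equiv.Perm (Fin n)) (s : Finset (Fin n)) (d : ℕ) : ℕ :=
  sSup {N | ∃ S : Fin d → Finset (Fin n),
    (∀ i, S i ⊆ s) ∧ (∀ i, SChain σ (S i)) ∧ (∀ i j, i ≠ j → Disjoint (S i) (S j)) ∧
    N = ∑ i, (S i).card}

section greeneAPI

variable {w : List ℕ} {d : ℕ}

lemma sum_card_le_of_disj {m : ℕ} {α : Type*} [DecidableEq α] [Fintype α]
    (S : Fin m → Finset α) (hd : ∀ i j, i ≠ j → Disjoint (S i) (S j)) :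
    ∑ i, (S i).card ≤ Fintype.card α := by
  classical
  rw [← Finset.card_biUnion (fun i _ j _ hij => hd i j hij)]
  simpa using Finset.card_le_card (Finset.subset_univ _)

lemma greene_set_nonempty (w : List ℕ) (d : ℕ) :
    {N | ∃ S : Fin d → Finset (Fin w.length),
      (∀ i, WkInc w (S i)) ∧ (∀ i j, i ≠ j → Disjoint (S i) (S j)) ∧
      N = ∑ i, (S i).card}.Nonempty := by
  refine ⟨0, fun _ => ∅, ?_, ?_, by simp⟩
  · intro i p hp; simp at hp
  · intro i j _; simp

lemma greene_set_bdd (w : List ℕ) (d : ℕ) :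
    BddAbove {N | ∃ S : Fin d → Finset (Fin w.length),
      (∀ i, WkInc w (S i)) ∧ (∀ i j, i ≠ j → Disjoint (S i) (S j)) ∧
      N = ∑ i, (S i).card} := by
  refine ⟨w.length, fun N hN => ?_⟩
  obtain ⟨S, _, hd, rfl⟩ := hN
  simpa using sum_card_le_of_disj S hd

lemma le_greene (S : Fin d → Finset (Fin w.length)) (h1 : ∀ i, WkInc w (S i))
    (h2 : ∀ i j, i ≠ j → Disjoint (S i) (S j)) : ∑ i, (S i).card ≤ greene w d :=
  le_csSup (greene_set_bdd w d) ⟨S, h1, h2, rfl⟩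

lemma greene_exists (w : List ℕ) (d : ℕ) :
    ∃ S : Fin d → Finset (Fin w.length),
      (∀ i, WkInc w (S i)) ∧ (∀ i j, i ≠ j → Disjoint (S i) (S j)) ∧
      greene w d = ∑ i, (S i).card :=
  Nat.sSup_mem (greene_set_nonempty w d) (greene_set_bdd w d)

lemma greene_le_length (w : List ℕ) (d : ℕ) : greene w d ≤ w.length := by
  obtain ⟨S, _, hd, hval⟩ := greene_exists w d
  rw [hval]
  simpa using sum_card_le_of_disj S hd

lemma greene_mono (w : List ℕ) (d : ℕ) : greene w d ≤ greene w (d + 1) := by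
  obtain ⟨S, h1, h2, hval⟩ := greene_exists w d
  rw [hval]
  have := le_greene (w := w) (d := d+1) (fun i => if h : (i : ℕ) < d then S ⟨i, h⟩ else ∅)
    (fun i => by
      by_cases h : (i : ℕ) < d
      · simpa [h] using h1 ⟨i, h⟩
      · simp [h, WkInc])
    (fun i j hij => by
      by_cases hi : (i : ℕ) < d <;> by_cases hj : (j : ℕ) < d <;> simp [hi, hj]
      exact h2 _ _ (by simp [Fin.ext_iff]; omega))
  refine le_trans (le_of_eq ?_) this
  rw [Fin.sum_univ_castSucc]
  simp [Fin.castSucc, Fin.castAdd, Fin.castLE]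

end greeneAPI

section gSAPI

variable {n : ℕ} {σ : Equiv.Perm (Fin n)} {s s₁ s₂ : Finset (Fin n)} {d : ℕ}

lemma gS_set_nonempty (σ : Equiv.Perm (Fin n)) (s : Finset (Fin n)) (d : ℕ) :
    {N | ∃ S : Fin d → Finset (Fin n),
      (∀ i, S i ⊆ s) ∧ (∀ i, SChain σ (S i)) ∧ (∀ i j, i ≠ j → Disjoint (S i) (S j)) ∧
      N = ∑ i, (S i).card}.Nonempty := by
  refine ⟨0, fun _ => ∅, by simp, ?_, by simp, by simp⟩
  intro i p hp; simp at hp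

lemma gS_set_bdd (σ : Equiv.Perm (Fin n)) (s : Finset (Fin n)) (d : ℕ) :
    BddAbove {N | ∃ S : Fin d → Finset (Fin n),
      (∀ i, S i ⊆ s) ∧ (∀ i, SChain σ (S i)) ∧ (∀ i j, i ≠ j → Disjoint (S i) (S j)) ∧
      N = ∑ i, (S i).card} := by
  classical
  refine ⟨s.card, fun N hN => ?_⟩
  obtain ⟨S, hsub, _, hd, rfl⟩ := hN
  calc ∑ i, (S i).card = (Finset.univ.biUnion S).card :=
        (Finset.card_biUnion (fun i _ j _ hij => hd i j hij)).symm
    _ ≤ s.card := Finset.card_le_card (by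
        intro x hx; simp only [Finset.mem_biUnion] at hx
        obtain ⟨i, _, hxi⟩ := hx; exact hsub i hxi)

lemma le_gS (S : Fin d → Finset (Fin n)) (h0 : ∀ i, S i ⊆ s) (h1 : ∀ i, SChain σ (S i))
    (h2 : ∀ i j, i ≠ j → Disjoint (S i) (S j)) : ∑ i, (S i).card ≤ gS σ s d :=
  le_csSup (gS_set_bdd σ s d) ⟨S, h0, h1, h2, rfl⟩

lemma gS_exists (σ : Equiv.Perm (Fin n)) (s : Finset (Fin n)) (d : ℕ) :
    ∃ S : Fin d → Finset (Fin n),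
      (∀ i, S i ⊆ s) ∧ (∀ i, SChain σ (S i)) ∧ (∀ i j, i ≠ j → Disjoint (S i) (S j)) ∧
      gS σ s d = ∑ i, (S i).card :=
  Nat.sSup_mem (gS_set_nonempty σ s d) (gS_set_bdd σ s d)

lemma gS_le_card (σ : Equiv.Perm (Fin n)) (s : Finset (Fin n)) (d : ℕ) :
    gS σ s d ≤ s.card := by
  obtain ⟨S, hsub, _, hd, hval⟩ := gS_exists σ s d
  rw [hval]
  calc ∑ i, (S i).card = (Finset.univ.biUnion S).card :=
        (Finset.card_biUnion (fun i _ j _ hij => hd i j hij)).symm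
    _ ≤ s.card := Finset.card_le_card (by
        intro x hx; simp only [Finset.mem_biUnion] at hx
        obtain ⟨i, _, hxi⟩ := hx; exact hsub i hxi)

lemma one_le_gS {p : Fin n} (hp : p ∈ s) (hd : 1 ≤ d) : 1 ≤ gS σ s d := by
  have := le_gS (s := s) (σ := σ) (d := d) (fun i => if (i : ℕ) = 0 then {p} else ∅)
    (fun i => by by_cases h : (i:ℕ) = 0 <;> simp [h, hp])
    (fun i => by
      split
      · intro a ha b hb hab; simp only [Finset.mem_singleton] at ha hb
        subst ha; subst hb; exact absurd hab (lt_irrefl _)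
      · intro a ha b hb hab; simp at ha)
    (fun i j hij => by
      by_cases hi : (i:ℕ) = 0 <;> by_cases hj : (j:ℕ) = 0 <;> simp [hi, hj]
      exact absurd (Fin.ext (by omega)) hij)
  refine le_trans ?_ this
  rw [Finset.sum_eq_single ⟨0, by omega⟩]
  · simp
  · intro b _ hb; simp [Fin.ext_iff] at hb ⊢; omega
  · simp




lemma SChain.mono {C C' : Finset (Fin n)} (h : SChain σ C) (hsub : C' ⊆ C) :
    SChain σ C' := fun p hp q hq hpq => h p (hsub hp) q (hsub hq) hpq

lemma gS_superadd (h1 : s₁ ⊆ s) (h2 : s₂ ⊆ s) (hdisj : Disjoint s₁ s₂) (a b : ℕ) :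
    gS σ s₁ a + gS σ s₂ b ≤ gS σ s (a + b) := by
  classical
  obtain ⟨S₁, hs₁, hc₁, hd₁, hv₁⟩ := gS_exists σ s₁ a
  obtain ⟨S₂, hs₂, hc₂, hd₂, hv₂⟩ := gS_exists σ s₂ b
  set S : Fin (a + b) → Finset (Fin n) := fun i =>
    if h : (i : ℕ) < a then S₁ ⟨i, h⟩ else S₂ ⟨(i : ℕ) - a, by omega⟩ with hS
  have hsub : ∀ i, S i ⊆ s := by
    intro i; rw [hS]; dsimp only; split
    · exact (hs₁ _).trans h1
    · exact (hs₂ _).trans h2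
  have hch : ∀ i, SChain σ (S i) := by
    intro i; rw [hS]; dsimp only; split
    · exact hc₁ _
    · exact hc₂ _
  have hdd : ∀ i j, i ≠ j → Disjoint (S i) (S j) := by
    intro i j hij
    rw [hS]; dsimp only
    rcases lt_or_ge (i : ℕ) a with hi | hi <;> rcases lt_or_ge (j : ℕ) a with hj | hj
    · rw [dif_pos hi, dif_pos hj]
      refine hd₁ _ _ ?_
      intro h; apply hij; apply Fin.ext; simpa using congrArg Fin.val h
    · rw [dif_pos hi, dif_neg (by omega)]
      exact hdisj.mono (hs₁ _) (hs₂ _)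
    · rw [dif_neg (by omega), dif_pos hj]
      exact hdisj.symm.mono (hs₂ _) (hs₁ _)
    · rw [dif_neg (by omega), dif_neg (by omega)]
      refine hd₂ _ _ ?_
      intro h; apply hij; apply Fin.ext
      have h2 : (i : ℕ) - a = (j : ℕ) - a := congrArg Fin.val h
      omega
  refine le_trans (le_of_eq ?_) (le_gS S hsub hch hdd)
  rw [Fin.sum_univ_add, hv₁, hv₂]
  congr 1
  · apply Finset.sum_congr rfl; intro i _
    rw [hS]; dsimp only
    rw [dif_pos (show ((Fin.castAdd b i : Fin (a+b)) : ℕ) < a by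
      simp only [Fin.coe_castAdd]; exact i.isLt)]
    exact congrArg (fun z => (S₁ z).card) (Fin.ext rfl)
  · apply Finset.sum_congr rfl; intro i _
    rw [hS]; dsimp only
    rw [dif_neg (show ¬ ((Fin.natAdd a i : Fin (a+b)) : ℕ) < a by
      have hval : ((Fin.natAdd a i : Fin (a+b)) : ℕ) = a + (i : ℕ) := rfl
      omega)]
    exact congrArg (fun z => (S₂ z).card) (Fin.ext (by
      have hval : ((Fin.natAdd a i : Fin (a+b)) : ℕ) = a + (i : ℕ) := rfl
      simp [hval]))

lemma gS_subadd (hdisj : Disjoint s₁ s₂) (hsub : s ⊆ s₁ ∪ s₂) :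
    gS σ s d ≤ gS σ s₁ d + gS σ s₂ d := by
  classical
  obtain ⟨S, hs, hc, hd, hv⟩ := gS_exists σ s d
  rw [hv]
  have key : ∀ i, (S i).card = (S i ∩ s₁).card + (S i ∩ s₂).card := by
    intro i
    rw [← Finset.card_union_of_disjoint (hdisj.mono Finset.inter_subset_right
      Finset.inter_subset_right)]
    congr 1
    rw [← Finset.inter_union_distrib_left]
    exact (Finset.inter_eq_left.2 ((hs i).trans hsub)).symm
  calc ∑ i, (S i).card = ∑ i, (S i ∩ s₁).card + ∑ i, (S i ∩ s₂).card := by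
        rw [← Finset.sum_add_distrib]; exact Finset.sum_congr rfl fun i _ => key i
    _ ≤ gS σ s₁ d + gS σ s₂ d := by
        gcongr
        · exact le_gS _ (fun i => Finset.inter_subset_right)
            (fun i => (hc i).mono Finset.inter_subset_left)
            (fun i j hij => (hd i j hij).mono Finset.inter_subset_left
              Finset.inter_subset_left)
        · exact le_gS _ (fun i => Finset.inter_subset_right)
            (fun i => (hc i).mono Finset.inter_subset_left)
            (fun i j hij => (hd i j hij).mono Finset.inter_subset_left
              Finset.inter_subset_left)

lemma gS_pair (h1 : s₁ ⊆ s) (h2 : s₂ ⊆ s)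
    (hcross : ∀ p ∈ s₁, ∀ q ∈ s₂, p < q ∧ σ p < σ q) :
    gS σ s₁ d + gS σ s₂ d ≤ gS σ s d := by
  classical
  have hdisj : Disjoint s₁ s₂ := by
    rw [Finset.disjoint_left]
    intro p hp1 hp2
    exact absurd (hcross p hp1 p hp2).1 (lt_irrefl _)
  obtain ⟨S₁, hs₁, hc₁, hd₁, hv₁⟩ := gS_exists σ s₁ d
  obtain ⟨S₂, hs₂, hc₂, hd₂, hv₂⟩ := gS_exists σ s₂ d
  set S : Fin d → Finset (Fin n) := fun i => S₁ i ∪ S₂ i with hS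
  have hcard : ∀ i, (S i).card = (S₁ i).card + (S₂ i).card := fun i =>
    Finset.card_union_of_disjoint (hdisj.mono (hs₁ i) (hs₂ i))
  have := le_gS S (fun i => Finset.union_subset ((hs₁ i).trans h1) ((hs₂ i).trans h2))
    (fun i => by
      intro p hp q hq hpq
      rcases Finset.mem_union.1 hp with hp1 | hp2 <;>
        rcases Finset.mem_union.1 hq with hq1 | hq2
      · exact hc₁ i p hp1 q hq1 hpq
      · exact (hcross p (hs₁ i hp1) q (hs₂ i hq2)).2
      · exact absurd ((hcross q (hs₁ i hq1) p (hs₂ i hp2)).1.trans hpq) (lt_irrefl _)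
      · exact hc₂ i p hp2 q hq2 hpq)
    (fun i j hij => by
      simp only [hS, Finset.disjoint_union_left, Finset.disjoint_union_right]
      exact ⟨⟨hd₁ i j hij, hdisj.symm.mono (hs₂ i) (hs₁ j)⟩,
        hdisj.mono (hs₁ i) (hs₂ j), hd₂ i j hij⟩)
  refine le_trans (le_of_eq ?_) this
  rw [hv₁, hv₂, ← Finset.sum_add_distrib]
  exact Finset.sum_congr rfl fun i _ => (hcard i).symm

lemma gS_skew_split (hcross : ∀ p ∈ s₁, ∀ q ∈ s₂, p < q ∧ σ q < σ p)
    (hsub : s ⊆ s₁ ∪ s₂) (d : ℕ) :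
    ∃ a b, a + b = d ∧ gS σ s d ≤ gS σ s₁ a + gS σ s₂ b := by
  classical
  obtain ⟨S, hs, hc, hd, hv⟩ := gS_exists σ s d
  have hin1 : ∀ i, ((S i) ∩ s₁).Nonempty → S i ⊆ s₁ := by
    intro i hne p hp
    obtain ⟨q, hq⟩ := hne
    have hq1 : q ∈ S i := (Finset.mem_inter.1 hq).1
    have hq2 : q ∈ s₁ := (Finset.mem_inter.1 hq).2
    rcases Finset.mem_union.1 (hsub (hs i hp)) with h | h
    · exact h
    · exfalso
      obtain ⟨hqp, hval⟩ := hcross q hq2 p h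
      exact absurd (hc i q hq1 p hp hqp) (asymm hval)
  have hin2 : ∀ i, ¬ ((S i) ∩ s₁).Nonempty → S i ⊆ s₂ := by
    intro i hne p hp
    rcases Finset.mem_union.1 (hsub (hs i hp)) with h | h
    · exact absurd ⟨p, Finset.mem_inter.2 ⟨hp, h⟩⟩ hne
    · exact h
  have key : ∀ (p : Fin d → Prop) [DecidablePred p] (t : Finset (Fin n))
      (hpt : ∀ i, p i → S i ⊆ t),
      ∑ i ∈ Finset.univ.filter p, (S i).card ≤ gS σ t (Finset.univ.filter p).card := by
    intro p _ t hpt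
    set T := Finset.univ.filter p with hT
    have hmemT : ∀ x : {x // x ∈ T}, p x.1 := fun x => (Finset.mem_filter.1 x.2).2
    let E := T.orderIsoOfFin rfl
    have hsum : ∑ i ∈ T, (S i).card = ∑ j : Fin T.card, (S (E j)).card := by
      rw [← Finset.sum_attach T (fun i => (S i).card)]
      exact (Fintype.sum_equiv E.toEquiv _ _ (fun j => rfl)).symm
    calc ∑ i ∈ T, (S i).card = ∑ j : Fin T.card, (S (E j)).card := hsum
      _ ≤ gS σ t T.card :=
        le_gS _ (fun j => hpt _ (hmemT (E j))) (fun j => hc _)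
          (fun i j hij => hd _ _ (fun h => hij (E.injective (Subtype.ext h))))
  have h1 := key (fun i => ((S i) ∩ s₁).Nonempty) s₁ hin1
  have h2 := key (fun i => ¬ ((S i) ∩ s₁).Nonempty) s₂ hin2
  have hcards : (Finset.univ.filter (fun i => ((S i) ∩ s₁).Nonempty)).card +
      (Finset.univ.filter (fun i => ¬ ((S i) ∩ s₁).Nonempty)).card = d := by
    rw [Finset.card_filter_add_card_filter_not]
    simp
  refine ⟨_, _, hcards, ?_⟩
  rw [hv, ← Finset.sum_filter_add_sum_filter_not Finset.univ
    (fun i => ((S i) ∩ s₁).Nonempty) (fun i => (S i).card)]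
  exact Nat.add_le_add h1 h2

end gSAPI


section transport

variable {n : ℕ} (σ : Equiv.Perm (Fin n))

lemma permWord_length : (permWord σ).length = n := by simp [permWord]

lemma permWord_get (p : Fin (permWord σ).length) :
    (permWord σ).get p = (σ (Fin.cast (permWord_length σ) p) : ℕ) + 1 := by
  rw [List.get_eq_getElem]
  simp only [permWord, List.getElem_ofFn]
  rfl

lemma greene_eq_gS (d : ℕ) : greene (permWord σ) d = gS σ Finset.univ d := by
  classical
  have hlen := permWord_length σ
  apply le_antisymm
  · obtain ⟨S, h1, h2, hval⟩ := greene_exists (permWord σ) d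
    rw [hval]
    have hinj : Function.Injective (Fin.cast hlen) := fun p q h => by
      apply Fin.ext; simpa using congrArg Fin.val h
    refine le_trans (le_of_eq ?_) (le_gS (fun i => (S i).image (Fin.cast hlen))
      (fun i => Finset.subset_univ _) ?_ ?_)
    · exact Finset.sum_congr rfl fun i _ => (Finset.card_image_of_injective _ hinj).symm
    · intro i p hp q hq hpq
      simp only [Finset.mem_image] at hp hq
      obtain ⟨p0, hp0, rfl⟩ := hp
      obtain ⟨q0, hq0, rfl⟩ := hq
      have hlt : p0 < q0 := by
        rw [Fin.lt_def] at hpq ⊢; exact hpq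
      have hle := h1 i p0 hp0 q0 hq0 hlt
      rw [permWord_get σ p0, permWord_get σ q0] at hle
      have hne : σ (Fin.cast hlen p0) ≠ σ (Fin.cast hlen q0) := by
        intro h
        exact absurd (hinj (σ.injective h)) (ne_of_lt hlt)
      have hne' : ((σ (Fin.cast hlen p0)) : ℕ) ≠ ((σ (Fin.cast hlen q0)) : ℕ) :=
        fun h => hne (Fin.ext h)
      rw [Fin.lt_def]
      omega
    · intro i j hij
      rw [Finset.disjoint_image hinj]
      exact h2 i j hij
  · obtain ⟨S, h0, h1, h2, hval⟩ := gS_exists σ Finset.univ d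
    rw [hval]
    have hinj : Function.Injective (Fin.cast hlen.symm) := fun p q h => by
      apply Fin.ext; simpa using congrArg Fin.val h
    refine le_trans (le_of_eq ?_) (le_greene (fun i => (S i).image (Fin.cast hlen.symm))
      ?_ ?_)
    · exact Finset.sum_congr rfl fun i _ => (Finset.card_image_of_injective _ hinj).symm
    · intro i p hp q hq hpq
      simp only [Finset.mem_image] at hp hq
      obtain ⟨p0, hp0, rfl⟩ := hp
      obtain ⟨q0, hq0, rfl⟩ := hq
      have hlt : p0 < q0 := by
        rw [Fin.lt_def] at hpq ⊢; exact hpq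
      have := h1 i p0 hp0 q0 hq0 hlt
      rw [permWord_get σ, permWord_get σ]
      have hcast : ∀ r : Fin n, Fin.cast hlen (Fin.cast hlen.symm r) = r := by
        intro r; apply Fin.ext; rfl
      rw [hcast, hcast]
      rw [Fin.lt_def] at this
      omega
    · intro i j hij
      rw [Finset.disjoint_image hinj]
      exact h2 i j hij

end transport

section patterns

variable {n : ℕ} {σ : Equiv.Perm (Fin n)}

lemma vec4_0 {α : Type*} (x0 x1 x2 x3 : α) (h : 0 < 4) :
    ![x0,x1,x2,x3] (⟨0, h⟩ : Fin 4) = x0 := rfl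
lemma vec4_1 {α : Type*} (x0 x1 x2 x3 : α) (h : 1 < 4) :
    ![x0,x1,x2,x3] (⟨1, h⟩ : Fin 4) = x1 := rfl
lemma vec4_2 {α : Type*} (x0 x1 x2 x3 : α) (h : 2 < 4) :
    ![x0,x1,x2,x3] (⟨2, h⟩ : Fin 4) = x2 := rfl
lemma vec4_3 {α : Type*} (x0 x1 x2 x3 : α) (h : 3 < 4) :
    ![x0,x1,x2,x3] (⟨3, h⟩ : Fin 4) = x3 := rfl

def Has3142 (σ : Equiv.Perm (Fin n)) : Prop :=
  ∃ a b c d : Fin n, a < b ∧ b < c ∧ c < d ∧ σ b < σ d ∧ σ d < σ a ∧ σ a < σ c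

def Has2413 (σ : Equiv.Perm (Fin n)) : Prop :=
  ∃ a b c d : Fin n, a < b ∧ b < c ∧ c < d ∧ σ c < σ a ∧ σ a < σ d ∧ σ d < σ b

lemma contains_of_has {π : Equiv.Perm (Fin 4)} {a b c d : Fin n}
    (hab : a < b) (hbc : b < c) (hcd : c < d)
    (hiso : ∀ j k : Fin 4, π j < π k ↔
      σ (![a,b,c,d] j) < σ (![a,b,c,d] k)) :
    ContainsPattern π (permWord σ) := by
  refine ⟨fun j => Fin.cast (permWord_length σ).symm (![a,b,c,d] j), ?_, ?_⟩
  · intro x y hxy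
    have hm : (![a,b,c,d] x : Fin n) < ![a,b,c,d] y := by
      have h1 : a < c := hab.trans hbc
      have h2 : b < d := hbc.trans hcd
      have h3 : a < d := hab.trans h2
      fin_cases x <;> fin_cases y <;>
        simp only [vec4_0, vec4_1, vec4_2, vec4_3] <;>
        first
          | assumption
          | (exfalso; revert hxy; decide)
    rw [Fin.lt_def]; rw [Fin.lt_def] at hm; exact hm
  · intro j k
    rw [permWord_get σ, permWord_get σ]
    have hcast : ∀ r : Fin n, Fin.cast (permWord_length σ)
        (Fin.cast (permWord_length σ).symm r) = r := fun r => Fin.ext rfl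
    rw [hcast, hcast]
    have e1 : ∀ x y : Fin n, ((σ x : ℕ) + 1 < (σ y : ℕ) + 1) ↔ σ x < σ y := by
      intro x y; rw [Fin.lt_def]; omega
    rw [e1, e1]
    exact ⟨(hiso j k).symm, (hiso k j).symm⟩

lemma separable_avoids (h : Separable σ) : ¬ Has3142 σ ∧ ¬ Has2413 σ := by
  constructor
  · rintro ⟨a, b, c, d, hab, hbc, hcd, v1, v2, v3⟩
    apply h.1
    refine contains_of_has hab hbc hcd ?_
    rw [Fin.lt_def] at v1 v2 v3
    intro j k
    fin_cases j <;> fin_cases k <;>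
      simp only [p3142, Equiv.coe_fn_mk, vec4_0, vec4_1, vec4_2, vec4_3, Fin.lt_def] <;>
      omega
  · rintro ⟨a, b, c, d, hab, hbc, hcd, v1, v2, v3⟩
    apply h.2
    refine contains_of_has hab hbc hcd ?_
    rw [Fin.lt_def] at v1 v2 v3
    intro j k
    fin_cases j <;> fin_cases k <;>
      simp only [p2413, Equiv.coe_fn_mk, vec4_0, vec4_1, vec4_2, vec4_3, Fin.lt_def] <;>
      omega

end patterns


section cut

variable {n : ℕ} {σ : Equiv.Perm (Fin n)}

lemma sigma_ne {p q : Fin n} (h : p ≠ q) : σ p ≠ σ q := fun he => h (σ.injective he)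

lemma cut_exists (h1 : ¬ Has3142 σ) (h2 : ¬ Has2413 σ) (s : Finset (Fin n)) :
    2 ≤ s.card →
    ∃ s₁ s₂ : Finset (Fin n), s₁.Nonempty ∧ s₂.Nonempty ∧ Disjoint s₁ s₂ ∧ s₁ ∪ s₂ = s ∧
      (∀ p ∈ s₁, ∀ q ∈ s₂, p < q) ∧
      ((∀ p ∈ s₁, ∀ q ∈ s₂, σ p < σ q) ∨ (∀ p ∈ s₁, ∀ q ∈ s₂, σ q < σ p)) := by
  classical
  induction s using Finset.strongInduction with
  | _ s IH =>
  intro hcard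
  by_cases hc2 : s.card = 2
  · obtain ⟨x, y, hxy, rfl⟩ := Finset.card_eq_two.1 hc2
    have hmx : x ∈ ({x, y} : Finset (Fin n)) := by simp
    have hmy : y ∈ ({x, y} : Finset (Fin n)) := by simp
    rcases lt_or_gt_of_ne hxy with hl | hl
    · refine ⟨{x}, {y}, ⟨x, by simp⟩, ⟨y, by simp⟩,
        by simpa [Finset.disjoint_singleton] using hxy, by ext z; simp, ?_, ?_⟩
      · intro p hp q hq
        simp only [Finset.mem_singleton] at hp hq; subst hp; subst hq; exact hl
      · rcases lt_or_gt_of_ne (sigma_ne (σ := σ) hxy) with hv | hv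
        · left; intro p hp q hq
          simp only [Finset.mem_singleton] at hp hq; subst hp; subst hq; exact hv
        · right; intro p hp q hq
          simp only [Finset.mem_singleton] at hp hq; subst hp; subst hq; exact hv
    · refine ⟨{y}, {x}, ⟨y, by simp⟩, ⟨x, by simp⟩,
        by simpa [Finset.disjoint_singleton] using Ne.symm hxy,
        by ext z; simp [or_comm], ?_, ?_⟩
      · intro p hp q hq
        simp only [Finset.mem_singleton] at hp hq; subst hp; subst hq; exact hl
      · rcases lt_or_gt_of_ne (sigma_ne (σ := σ) (Ne.symm hxy)) with hv | hv
        · left; intro p hp q hq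
          simp only [Finset.mem_singleton] at hp hq; subst hp; subst hq; exact hv
        · right; intro p hp q hq
          simp only [Finset.mem_singleton] at hp hq; subst hp; subst hq; exact hv
  · -- s.card ≥ 3
    have hne : s.Nonempty := Finset.card_pos.1 (by omega)
    set M := s.max' hne with hM
    have hMmem : M ∈ s := s.max'_mem hne
    set s' := s.erase M with hs'
    have hs'card : s'.card = s.card - 1 := Finset.card_erase_of_mem hMmem
    have hsub' : s' ⊆ s := Finset.erase_subset _ _
    have hltM : ∀ p ∈ s', p < M := by
      intro p hp
      have hps : p ∈ s := hsub' hp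
      have hpne : p ≠ M := (Finset.mem_erase.1 hp).1
      exact lt_of_le_of_ne (s.le_max' p hps) hpne
    have hMnotins' : M ∉ s' := Finset.notMem_erase _ _
    have hins : s' ∪ {M} = s := by
      ext z
      simp only [Finset.mem_union, Finset.mem_singleton, hs', Finset.mem_erase]
      constructor
      · rintro (⟨_, hz⟩ | rfl)
        · exact hz
        · exact hMmem
      · intro hz
        by_cases hzM : z = M
        · exact Or.inr hzM
        · exact Or.inl ⟨hzM, hz⟩
    obtain ⟨s₁, s₂, h1ne, h2ne, hdisj, huni, hpos, hvals⟩ :=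
      IH s' (Finset.erase_ssubset hMmem) (by omega)
    have hsub1 : s₁ ⊆ s' := huni ▸ Finset.subset_union_left
    have hsub2 : s₂ ⊆ s' := huni ▸ Finset.subset_union_right
    have hMne1 : ∀ p ∈ s₁, p ≠ M := fun p hp => (Finset.mem_erase.1 (hsub1 hp)).1
    have hMne2 : ∀ p ∈ s₂, p ≠ M := fun p hp => (Finset.mem_erase.1 (hsub2 hp)).1
    rcases hvals with hplus | hminus
    · -- direct-sum cut of s'
      by_cases hA1 : ∀ p ∈ s₁, σ p < σ M
      · refine ⟨s₁, s₂ ∪ {M}, h1ne, ⟨M, by simp⟩, ?_, ?_, ?_, Or.inl ?_⟩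
        · rw [Finset.disjoint_union_right]
          exact ⟨hdisj, by
            rw [Finset.disjoint_singleton_right]
            exact fun hMs₁ => (hMne1 M hMs₁) rfl⟩
        · rw [← Finset.union_assoc, huni]; exact hins
        · intro p hp q hq
          rcases Finset.mem_union.1 hq with hq' | hq'
          · exact hpos p hp q hq'
          · rw [Finset.mem_singleton] at hq'; subst hq'
            exact hltM p (hsub1 hp)
        · intro p hp q hq
          rcases Finset.mem_union.1 hq with hq' | hq'
          · exact hplus p hp q hq'
          · rw [Finset.mem_singleton] at hq'; subst hq'
            exact hA1 p hp
      · push_neg at hA1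
        obtain ⟨i₀, hi₀s, hi₀⟩ := hA1
        have hMi₀ : σ M < σ i₀ :=
          lt_of_le_of_ne hi₀ (sigma_ne (Ne.symm (hMne1 i₀ hi₀s)))
        by_cases hA2 : ∀ p ∈ s₁, σ M < σ p
        · refine ⟨s', {M}, ⟨i₀, hsub1 hi₀s⟩, ⟨M, by simp⟩, ?_, hins, ?_, Or.inr ?_⟩
          · rw [Finset.disjoint_singleton_right]; exact hMnotins'
          · intro p hp q hq
            rw [Finset.mem_singleton] at hq; subst hq; exact hltM p hp
          · intro p hp q hq
            rw [Finset.mem_singleton] at hq; subst hq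
            rcases Finset.mem_union.1 (huni ▸ hp) with hp' | hp'
            · exact hA2 p hp'
            · exact hMi₀.trans (hplus i₀ hi₀s p hp')
        · push_neg at hA2
          obtain ⟨a', ha's, ha'⟩ := hA2
          have ha'M : σ a' < σ M :=
            lt_of_le_of_ne ha' (sigma_ne (hMne1 a' ha's))
          have key : ∀ p ∈ s₁, ∀ q ∈ s₁, p < q → σ M < σ p → σ M < σ q := by
            intro p hp q hq hpq hP
            by_contra hq'
            have hq'' : σ q < σ M :=
              lt_of_le_of_ne (not_lt.1 hq') (sigma_ne (hMne1 q hq))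
            obtain ⟨jj, hjj⟩ := h2ne
            exact h1 ⟨p, q, jj, M, hpq, hpos q hq jj hjj, hltM jj (hsub2 hjj),
              hq'', hP, hplus p hp jj hjj⟩
          refine ⟨s₁.filter (fun p => σ p < σ M),
            (s₁.filter (fun p => σ M < σ p)) ∪ s₂ ∪ {M},
            ⟨a', Finset.mem_filter.2 ⟨ha's, ha'M⟩⟩,
            ⟨i₀, by
              rw [Finset.mem_union, Finset.mem_union]
              exact Or.inl (Or.inl (Finset.mem_filter.2 ⟨hi₀s, hMi₀⟩))⟩,
            ?_, ?_, ?_, Or.inl ?_⟩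
          · rw [Finset.disjoint_union_right, Finset.disjoint_union_right]
            refine ⟨⟨?_, hdisj.mono_left (Finset.filter_subset _ _)⟩, ?_⟩
            · rw [Finset.disjoint_left]
              intro p hp hp'
              have v1 := (Finset.mem_filter.1 hp).2
              have v2 := (Finset.mem_filter.1 hp').2
              exact absurd (v1.trans v2) (lt_irrefl _)
            · rw [Finset.disjoint_singleton_right]
              intro hMm
              exact hMne1 M (Finset.mem_filter.1 hMm).1 rfl
          · -- union equals s
            rw [← hins, ← huni]
            ext p
            simp only [Finset.mem_union, Finset.mem_filter, Finset.mem_singleton]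
            constructor
            · rintro (⟨hp, _⟩ | ((⟨hp, _⟩ | hp) | rfl))
              · exact Or.inl (Or.inl hp)
              · exact Or.inl (Or.inl hp)
              · exact Or.inl (Or.inr hp)
              · exact Or.inr rfl
            · rintro ((hp | hp) | rfl)
              · rcases lt_or_gt_of_ne (sigma_ne (σ := σ) (hMne1 p hp)) with hv | hv
                · exact Or.inl ⟨hp, hv⟩
                · exact Or.inr (Or.inl (Or.inl ⟨hp, hv⟩))
              · exact Or.inr (Or.inl (Or.inr hp))
              · exact Or.inr (Or.inr rfl)
          · -- positions
            intro p hp q hq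
            have hp1 : p ∈ s₁ := (Finset.mem_filter.1 hp).1
            have hpv : σ p < σ M := (Finset.mem_filter.1 hp).2
            rcases Finset.mem_union.1 hq with hq' | hq'
            · rcases Finset.mem_union.1 hq' with hq'' | hq''
              · have hq1 : q ∈ s₁ := (Finset.mem_filter.1 hq'').1
                have hqv : σ M < σ q := (Finset.mem_filter.1 hq'').2
                rcases lt_trichotomy p q with h | h | h
                · exact h
                · exact absurd (h ▸ hqv) (asymm hpv)
                · exact absurd (key q hq1 p hp1 h hqv) (asymm hpv)
              · exact hpos p hp1 q hq''
            · rw [Finset.mem_singleton] at hq'; subst hq'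
              exact hltM p (hsub1 hp1)
          · -- values
            intro p hp q hq
            have hp1 : p ∈ s₁ := (Finset.mem_filter.1 hp).1
            have hpv : σ p < σ M := (Finset.mem_filter.1 hp).2
            rcases Finset.mem_union.1 hq with hq' | hq'
            · rcases Finset.mem_union.1 hq' with hq'' | hq''
              · exact hpv.trans (Finset.mem_filter.1 hq'').2
              · exact hplus p hp1 q hq''
            · rw [Finset.mem_singleton] at hq'; subst hq'
              exact hpv
    · -- skew-sum cut of s'
      by_cases hB1 : ∀ p ∈ s₁, σ M < σ p
      · refine ⟨s₁, s₂ ∪ {M}, h1ne, ⟨M, by simp⟩, ?_, ?_, ?_, Or.inr ?_⟩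
        · rw [Finset.disjoint_union_right]
          exact ⟨hdisj, by
            rw [Finset.disjoint_singleton_right]
            exact fun hMs₁ => (hMne1 M hMs₁) rfl⟩
        · rw [← Finset.union_assoc, huni]; exact hins
        · intro p hp q hq
          rcases Finset.mem_union.1 hq with hq' | hq'
          · exact hpos p hp q hq'
          · rw [Finset.mem_singleton] at hq'; subst hq'
            exact hltM p (hsub1 hp)
        · intro p hp q hq
          rcases Finset.mem_union.1 hq with hq' | hq'
          · exact hminus p hp q hq'
          · rw [Finset.mem_singleton] at hq'; subst hq'
            exact hB1 p hp
      · push_neg at hB1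
        obtain ⟨i₀, hi₀s, hi₀⟩ := hB1
        have hi₀M : σ i₀ < σ M :=
          lt_of_le_of_ne hi₀ (sigma_ne (hMne1 i₀ hi₀s))
        by_cases hB2 : ∀ p ∈ s₁, σ p < σ M
        · refine ⟨s', {M}, ⟨i₀, hsub1 hi₀s⟩, ⟨M, by simp⟩, ?_, hins, ?_, Or.inl ?_⟩
          · rw [Finset.disjoint_singleton_right]; exact hMnotins'
          · intro p hp q hq
            rw [Finset.mem_singleton] at hq; subst hq; exact hltM p hp
          · intro p hp q hq
            rw [Finset.mem_singleton] at hq; subst hq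
            rcases Finset.mem_union.1 (huni ▸ hp) with hp' | hp'
            · exact hB2 p hp'
            · exact (hminus i₀ hi₀s p hp').trans hi₀M
        · push_neg at hB2
          obtain ⟨a', ha's, ha'⟩ := hB2
          have ha'M : σ M < σ a' :=
            lt_of_le_of_ne ha' (sigma_ne (Ne.symm (hMne1 a' ha's)))
          have key : ∀ p ∈ s₁, ∀ q ∈ s₁, p < q → σ p < σ M → σ q < σ M := by
            intro p hp q hq hpq hP
            by_contra hq'
            have hq'' : σ M < σ q :=
              lt_of_le_of_ne (not_lt.1 hq') (sigma_ne (Ne.symm (hMne1 q hq)))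
            obtain ⟨jj, hjj⟩ := h2ne
            exact h2 ⟨p, q, jj, M, hpq, hpos q hq jj hjj, hltM jj (hsub2 hjj),
              hminus p hp jj hjj, hP, hq''⟩
          refine ⟨s₁.filter (fun p => σ M < σ p),
            (s₁.filter (fun p => σ p < σ M)) ∪ s₂ ∪ {M},
            ⟨a', Finset.mem_filter.2 ⟨ha's, ha'M⟩⟩,
            ⟨i₀, by
              rw [Finset.mem_union, Finset.mem_union]
              exact Or.inl (Or.inl (Finset.mem_filter.2 ⟨hi₀s, hi₀M⟩))⟩,
            ?_, ?_, ?_, Or.inr ?_⟩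
          · rw [Finset.disjoint_union_right, Finset.disjoint_union_right]
            refine ⟨⟨?_, hdisj.mono_left (Finset.filter_subset _ _)⟩, ?_⟩
            · rw [Finset.disjoint_left]
              intro p hp hp'
              have v1 := (Finset.mem_filter.1 hp).2
              have v2 := (Finset.mem_filter.1 hp').2
              exact absurd (v1.trans v2) (lt_irrefl _)
            · rw [Finset.disjoint_singleton_right]
              intro hMm
              exact hMne1 M (Finset.mem_filter.1 hMm).1 rfl
          · rw [← hins, ← huni]
            ext p
            simp only [Finset.mem_union, Finset.mem_filter, Finset.mem_singleton]
            constructor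
            · rintro (⟨hp, _⟩ | ((⟨hp, _⟩ | hp) | rfl))
              · exact Or.inl (Or.inl hp)
              · exact Or.inl (Or.inl hp)
              · exact Or.inl (Or.inr hp)
              · exact Or.inr rfl
            · rintro ((hp | hp) | rfl)
              · rcases lt_or_gt_of_ne (sigma_ne (σ := σ) (hMne1 p hp)) with hv | hv
                · exact Or.inr (Or.inl (Or.inl ⟨hp, hv⟩))
                · exact Or.inl ⟨hp, hv⟩
              · exact Or.inr (Or.inl (Or.inr hp))
              · exact Or.inr (Or.inr rfl)
          · intro p hp q hq
            have hp1 : p ∈ s₁ := (Finset.mem_filter.1 hp).1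
            have hpv : σ M < σ p := (Finset.mem_filter.1 hp).2
            rcases Finset.mem_union.1 hq with hq' | hq'
            · rcases Finset.mem_union.1 hq' with hq'' | hq''
              · have hq1 : q ∈ s₁ := (Finset.mem_filter.1 hq'').1
                have hqv : σ q < σ M := (Finset.mem_filter.1 hq'').2
                rcases lt_trichotomy p q with h | h | h
                · exact h
                · exact absurd (h ▸ hqv) (asymm hpv)
                · exact absurd (key q hq1 p hp1 h hqv) (asymm hpv)
              · exact hpos p hp1 q hq''
            · rw [Finset.mem_singleton] at hq'; subst hq'
              exact hltM p (hsub1 hp1)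
          · intro p hp q hq
            have hp1 : p ∈ s₁ := (Finset.mem_filter.1 hp).1
            have hpv : σ M < σ p := (Finset.mem_filter.1 hp).2
            rcases Finset.mem_union.1 hq with hq' | hq'
            · rcases Finset.mem_union.1 hq' with hq'' | hq''
              · exact ((Finset.mem_filter.1 hq'').2).trans hpv
              · exact hminus p hp1 q hq''
            · rw [Finset.mem_singleton] at hq'; subst hq'
              exact hpv

end cut


section claim

variable {n : ℕ} {σ : Equiv.Perm (Fin n)}

lemma gS_zero (σ : Equiv.Perm (Fin n)) (s : Finset (Fin n)) : gS σ s 0 = 0 := by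
  obtain ⟨S, _, _, _, hval⟩ := gS_exists σ s 0
  rw [hval]; simp

lemma wkInc_empty (w : List ℕ) : WkInc w ∅ := by
  intro p hp; simp at hp

lemma wkInc_singleton (w : List ℕ) (p : Fin w.length) : WkInc w {p} := by
  intro a ha b hb hab
  simp only [Finset.mem_singleton] at ha hb
  subst ha; subst hb; exact absurd hab (lt_irrefl _)

lemma claimStar (h1 : ¬ Has3142 σ) (h2 : ¬ Has2413 σ)
    (w : List ℕ) (e : Fin n → Fin w.length) (he : StrictMono e)
    (hv : ∀ i, w.get (e i) = (σ i : ℕ) + 1) :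
    ∀ (N : ℕ) (s : Finset (Fin n)), s.card ≤ N →
    ∀ (R : Finset (Fin w.length)) (k : ℕ) (F : Finset (Finset (Fin w.length))),
      (∀ i ∈ s, e i ∈ R) → F.card ≤ k → (∀ f ∈ F, WkInc w f) →
      (∀ f ∈ F, ∀ g ∈ F, f ≠ g → Disjoint f g) →
      ∃ c : Finset (Fin w.length), WkInc w c ∧ c ⊆ R ∧ (∀ f ∈ F, Disjoint c f) ∧
        gS σ s (k + 1) ≤ gS σ s k + c.card := by
  classical
  intro N
  induction N with
  | zero =>
    intro s hs R k F _ _ _ _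
    refine ⟨∅, wkInc_empty w, Finset.empty_subset _, fun f _ => Finset.disjoint_empty_left _, ?_⟩
    have := gS_le_card σ s (k + 1)
    omega
  | succ N IH =>
    intro s hs R k F him hFc hFw hFd
    rcases Nat.lt_or_ge s.card 2 with hsmall | hbig
    · -- |s| ≤ 1
      by_cases hempty : s = ∅
      · subst hempty
        refine ⟨∅, wkInc_empty w, Finset.empty_subset _,
          fun f _ => Finset.disjoint_empty_left _, ?_⟩
        have := gS_le_card σ (∅ : Finset (Fin n)) (k + 1)
        simp at this
        omega
      · obtain ⟨p, hp⟩ := Finset.nonempty_of_ne_empty hempty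
        have hpos0 : 0 < s.card := Finset.card_pos.2 ⟨p, hp⟩
        rcases k with _ | k'
        · have hF : F = ∅ := Finset.card_eq_zero.1 (by omega)
          subst hF
          refine ⟨{e p}, wkInc_singleton w (e p), ?_, by simp, ?_⟩
          · intro x hx
            rw [Finset.mem_singleton] at hx; subst hx; exact him p hp
          · have hle := gS_le_card σ s (0 + 1)
            have h0 := gS_zero σ s
            simp only [Finset.card_singleton]
            omega
        · refine ⟨∅, wkInc_empty w, Finset.empty_subset _,
            fun f _ => Finset.disjoint_empty_left _, ?_⟩
          have hle := gS_le_card σ s (k' + 1 + 1)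
          have hge := one_le_gS (σ := σ) hp (show 1 ≤ k' + 1 by omega)
          simp only [Finset.card_empty]
          omega
    · -- |s| ≥ 2 : use the cut
      obtain ⟨s₁, s₂, h1ne, h2ne, hdisj, huni, hpos, hvals⟩ := cut_exists h1 h2 s hbig
      have hsub1 : s₁ ⊆ s := huni ▸ Finset.subset_union_left
      have hsub2 : s₂ ⊆ s := huni ▸ Finset.subset_union_right
      have hcards : s₁.card + s₂.card = s.card := by
        rw [← huni]; exact (Finset.card_union_of_disjoint hdisj).symm
      have hc1 : s₁.card ≤ N := by
        have := Finset.card_pos.2 h2ne; omega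
      have hc2 : s₂.card ≤ N := by
        have := Finset.card_pos.2 h1ne; omega
      set pm := s₁.max' h1ne with hpm
      have hpm1 : pm ∈ s₁ := s₁.max'_mem h1ne
      set t := e pm with ht
      rcases hvals with hplus | hminus
      · -- direct sum case
        obtain ⟨iv, hiv_mem, hiv⟩ := Finset.exists_max_image s₁ (fun i => (σ i : ℕ)) h1ne
        set v := w.get (e iv) with hvv
        set A := R.filter (fun p => p ≤ t ∧ w.get p ≤ v) with hA
        set B := R.filter (fun p => t < p ∧ v < w.get p) with hB
        have hmemA : ∀ i ∈ s₁, e i ∈ A := by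
          intro i hi
          rw [hA, Finset.mem_filter]
          refine ⟨him i (hsub1 hi), he.monotone (s₁.le_max' i hi), ?_⟩
          rw [hv i, hvv, hv iv]
          have := hiv i hi
          omega
        have hmemB : ∀ i ∈ s₂, e i ∈ B := by
          intro i hi
          rw [hB, Finset.mem_filter]
          refine ⟨him i (hsub2 hi), he (hpos pm hpm1 i hi), ?_⟩
          rw [hv i, hvv, hv iv]
          have := hplus iv hiv_mem i hi
          rw [Fin.lt_def] at this
          omega
        obtain ⟨c₁, hc₁w, hc₁A, hc₁d, hc₁b⟩ := IH s₁ hc1 A k F hmemA hFc hFw hFd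
        obtain ⟨c₂, hc₂w, hc₂B, hc₂d, hc₂b⟩ := IH s₂ hc2 B k F hmemB hFc hFw hFd
        have hAB : ∀ p ∈ A, ∀ q ∈ B, p < q ∧ w.get p ≤ w.get q := by
          intro p hp q hq
          rw [hA, Finset.mem_filter] at hp
          rw [hB, Finset.mem_filter] at hq
          exact ⟨lt_of_le_of_lt hp.2.1 hq.2.1, le_trans hp.2.2 (le_of_lt hq.2.2)⟩
        have hdisjc : Disjoint c₁ c₂ := by
          rw [Finset.disjoint_left]
          intro p hp1 hp2
          exact absurd (hAB p (hc₁A hp1) p (hc₂B hp2)).1 (lt_irrefl _)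
        refine ⟨c₁ ∪ c₂, ?_, ?_, ?_, ?_⟩
        · intro p hp q hq hpq
          rcases Finset.mem_union.1 hp with hp' | hp' <;>
            rcases Finset.mem_union.1 hq with hq' | hq'
          · exact hc₁w p hp' q hq' hpq
          · exact (hAB p (hc₁A hp') q (hc₂B hq')).2
          · exact absurd ((hAB q (hc₁A hq') p (hc₂B hp')).1.trans hpq) (lt_irrefl _)
          · exact hc₂w p hp' q hq' hpq
        · refine Finset.union_subset ?_ ?_
          · exact hc₁A.trans (by rw [hA]; exact Finset.filter_subset _ _)
          · exact hc₂B.trans (by rw [hB]; exact Finset.filter_subset _ _)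
        · intro f hf
          rw [Finset.disjoint_union_left]
          exact ⟨hc₁d f hf, hc₂d f hf⟩
        · have e1 : gS σ s (k+1) ≤ gS σ s₁ (k+1) + gS σ s₂ (k+1) :=
            gS_subadd hdisj (le_of_eq huni.symm)
          have e2 : gS σ s₁ k + gS σ s₂ k ≤ gS σ s k :=
            gS_pair hsub1 hsub2 (fun p hp q hq =>
              ⟨hpos p hp q hq, hplus p hp q hq⟩)
          have e3 : (c₁ ∪ c₂).card = c₁.card + c₂.card :=
            Finset.card_union_of_disjoint hdisjc
          omega
      · -- skew sum case
        obtain ⟨iv, hiv_mem, hiv⟩ := Finset.exists_max_image s₂ (fun i => (σ i : ℕ)) h2ne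
        set v := w.get (e iv) with hvv
        set C := R.filter (fun p => p ≤ t ∧ v < w.get p) with hC
        set D := R.filter (fun p => t < p ∧ w.get p ≤ v) with hD
        have hmemC : ∀ i ∈ s₁, e i ∈ C := by
          intro i hi
          rw [hC, Finset.mem_filter]
          refine ⟨him i (hsub1 hi), he.monotone (s₁.le_max' i hi), ?_⟩
          rw [hv i, hvv, hv iv]
          have := hminus i hi iv hiv_mem
          rw [Fin.lt_def] at this
          omega
        have hmemD : ∀ i ∈ s₂, e i ∈ D := by
          intro i hi
          rw [hD, Finset.mem_filter]
          refine ⟨him i (hsub2 hi), he (hpos pm hpm1 i hi), ?_⟩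
          rw [hv i, hvv, hv iv]
          have := hiv i hi
          omega
        set FC := F.filter (fun f => (f ∩ C).Nonempty) with hFC
        set FD := F.filter (fun f => (f ∩ D).Nonempty) with hFD
        have hCD : Disjoint FC FD := by
          rw [Finset.disjoint_left]
          intro f hf1 hf2
          rw [hFC, Finset.mem_filter] at hf1
          rw [hFD, Finset.mem_filter] at hf2
          obtain ⟨pc, hpc⟩ := hf1.2
          obtain ⟨pd, hpd⟩ := hf2.2
          rw [Finset.mem_inter] at hpc hpd
          have hpcC := hpc.2
          have hpdD := hpd.2
          rw [hC, Finset.mem_filter] at hpcC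
          rw [hD, Finset.mem_filter] at hpdD
          have hlt : pc < pd := lt_of_le_of_lt hpcC.2.1 hpdD.2.1
          have := hFw f hf1.1 pc hpc.1 pd hpd.1 hlt
          have hv1 := hpcC.2.2
          have hv2 := hpdD.2.2
          omega
        have hcardCD : FC.card + FD.card ≤ k := by
          have h3 : FC ∪ FD ⊆ F := Finset.union_subset
            (by rw [hFC]; exact Finset.filter_subset _ _)
            (by rw [hFD]; exact Finset.filter_subset _ _)
          have := Finset.card_le_card h3
          rw [Finset.card_union_of_disjoint hCD] at this
          omega
        obtain ⟨a, b, hab, hsplit⟩ :=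
          gS_skew_split (s := s) (σ := σ) (s₁ := s₁) (s₂ := s₂)
            (fun p hp q hq => ⟨hpos p hp q hq, hminus p hp q hq⟩)
            (le_of_eq huni.symm) (k + 1)
        have hcase : FC.card < a ∨ FD.card < b := by omega
        rcases hcase with hcs | hcs
        · obtain ⟨a', rfl⟩ : ∃ a', a = a' + 1 := ⟨a - 1, by omega⟩
          obtain ⟨c, hcw, hcC, hcd, hcb⟩ := IH s₁ hc1 C a' FC hmemC (by omega)
            (fun f hf => hFw f (by rw [hFC] at hf; exact (Finset.mem_filter.1 hf).1))
            (fun f hf g hg hfg => hFd f (by rw [hFC] at hf; exact (Finset.mem_filter.1 hf).1)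
              g (by rw [hFC] at hg; exact (Finset.mem_filter.1 hg).1) hfg)
          refine ⟨c, hcw, hcC.trans (by rw [hC]; exact Finset.filter_subset _ _), ?_, ?_⟩
          · intro f hf
            by_cases hfC : f ∈ FC
            · exact hcd f hfC
            · rw [Finset.disjoint_left]
              intro x hxc hxf
              apply hfC
              rw [hFC, Finset.mem_filter]
              exact ⟨hf, ⟨x, Finset.mem_inter.2 ⟨hxf, hcC hxc⟩⟩⟩
          · have e2 : gS σ s₁ a' + gS σ s₂ b ≤ gS σ s (a' + b) :=
              gS_superadd hsub1 hsub2 hdisj a' b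
            have hk : a' + b = k := by omega
            rw [hk] at e2
            omega
        · obtain ⟨b', rfl⟩ : ∃ b', b = b' + 1 := ⟨b - 1, by omega⟩
          obtain ⟨c, hcw, hcD, hcd, hcb⟩ := IH s₂ hc2 D b' FD hmemD (by omega)
            (fun f hf => hFw f (by rw [hFD] at hf; exact (Finset.mem_filter.1 hf).1))
            (fun f hf g hg hfg => hFd f (by rw [hFD] at hf; exact (Finset.mem_filter.1 hf).1)
              g (by rw [hFD] at hg; exact (Finset.mem_filter.1 hg).1) hfg)
          refine ⟨c, hcw, hcD.trans (by rw [hD]; exact Finset.filter_subset _ _), ?_, ?_⟩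
          · intro f hf
            by_cases hfD : f ∈ FD
            · exact hcd f hfD
            · rw [Finset.disjoint_left]
              intro x hxc hxf
              apply hfD
              rw [hFD, Finset.mem_filter]
              exact ⟨hf, ⟨x, Finset.mem_inter.2 ⟨hxf, hcD hxc⟩⟩⟩
          · have e2 : gS σ s₁ a + gS σ s₂ b' ≤ gS σ s (a + b') :=
              gS_superadd hsub1 hsub2 hdisj a b'
            have hk : a + b' = k := by omega
            rw [hk] at e2
            omega

end claim


section assemble

lemma telescope (w : List ℕ) : ∀ m : ℕ, ∑ k ∈ Finset.range m, shapePart w k ≤ greene w m := by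
  intro m
  induction m with
  | zero => simp [greene_set_nonempty]
  | succ m IH =>
    rw [Finset.sum_range_succ]
    have hmono := greene_mono w m
    have : shapePart w m = greene w (m+1) - greene w m := rfl
    omega

lemma main_part1 {n : ℕ} (σ : Equiv.Perm (Fin n)) (hsep : Separable σ) (w : List ℕ)
    (hsub : (permWord σ).Sublist w) (k : ℕ) :
    shapePart (permWord σ) k ≤ shapePart w k := by
  classical
  obtain ⟨h1, h2⟩ := separable_avoids hsep
  obtain ⟨f, hf⟩ := List.sublist_iff_exists_fin_orderEmbedding_get_eq.1 hsub
  set e : Fin n → Fin w.length := fun i => f (Fin.cast (permWord_length σ).symm i) with he_def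
  have he : StrictMono e := by
    intro i j hij
    apply f.strictMono
    rw [Fin.lt_def]
    exact hij
  have hv : ∀ i, w.get (e i) = (σ i : ℕ) + 1 := by
    intro i
    rw [he_def]
    dsimp only
    rw [← hf (Fin.cast (permWord_length σ).symm i), permWord_get σ]
    congr 1
  -- optimal family for greene w k
  obtain ⟨F₀, hF₀w, hF₀d, hF₀v⟩ := greene_exists w k
  set Fset : Finset (Finset (Fin w.length)) := (Finset.univ.image F₀).erase ∅ with hFset
  have hFcard : Fset.card ≤ k := by
    calc Fset.card ≤ (Finset.univ.image F₀).card := Finset.card_le_card (Finset.erase_subset _ _)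
      _ ≤ (Finset.univ : Finset (Fin k)).card := Finset.card_image_le
      _ = k := by simp
  have hFw : ∀ g ∈ Fset, WkInc w g := by
    intro g hg
    obtain ⟨i, _, rfl⟩ := Finset.mem_image.1 (Finset.mem_of_mem_erase hg)
    exact hF₀w i
  have hFd : ∀ g ∈ Fset, ∀ g' ∈ Fset, g ≠ g' → Disjoint g g' := by
    intro g hg g' hg' hgg'
    obtain ⟨i, _, rfl⟩ := Finset.mem_image.1 (Finset.mem_of_mem_erase hg)
    obtain ⟨j, _, rfl⟩ := Finset.mem_image.1 (Finset.mem_of_mem_erase hg')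
    exact hF₀d i j (fun hij => hgg' (by rw [hij]))
  obtain ⟨c, hcw, _, hcd, hcb⟩ := claimStar h1 h2 w e he hv n Finset.univ (by simp)
    Finset.univ k Fset (fun i _ => Finset.mem_univ _) hFcard hFw hFd
  -- c is disjoint from every F₀ i
  have hcd' : ∀ i, Disjoint c (F₀ i) := by
    intro i
    by_cases hFi : F₀ i = ∅
    · rw [hFi]; exact Finset.disjoint_empty_right _
    · exact hcd (F₀ i) (Finset.mem_erase.2 ⟨hFi, Finset.mem_image.2 ⟨i, Finset.mem_univ _, rfl⟩⟩)
  -- extend F₀ with c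
  have hext : greene w k + c.card ≤ greene w (k + 1) := by
    set F₁ : Fin (k+1) → Finset (Fin w.length) :=
      fun i => if h : (i : ℕ) < k then F₀ ⟨i, h⟩ else c with hF₁
    have hw1 : ∀ i, WkInc w (F₁ i) := by
      intro i; rw [hF₁]; dsimp only; split
      · exact hF₀w _
      · exact hcw
    have hw2 : ∀ i j, i ≠ j → Disjoint (F₁ i) (F₁ j) := by
      intro i j hij
      rw [hF₁]; dsimp only
      rcases lt_or_ge (i : ℕ) k with hi | hi <;> rcases lt_or_ge (j : ℕ) k with hj | hj
      · rw [dif_pos hi, dif_pos hj]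
        refine hF₀d _ _ ?_
        intro h; apply hij; apply Fin.ext; simpa using congrArg Fin.val h
      · rw [dif_pos hi, dif_neg (by omega)]
        exact (hcd' _).symm
      · rw [dif_neg (by omega), dif_pos hj]
        exact hcd' _
      · exfalso
        apply hij
        apply Fin.ext
        have := i.isLt
        have := j.isLt
        omega
    have hsum : ∑ i, (F₁ i).card = greene w k + c.card := by
      rw [Fin.sum_univ_castSucc, hF₀v]
      congr 1
      · apply Finset.sum_congr rfl
        intro i _
        rw [hF₁]; dsimp only
        rw [dif_pos (show ((Fin.castSucc i : Fin (k+1)) : ℕ) < k from i.isLt)]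
        exact congrArg (fun z => (F₀ z).card) (Fin.ext rfl)
      · rw [hF₁]; dsimp only
        rw [dif_neg (show ¬ ((Fin.last k : Fin (k+1)) : ℕ) < k by simp)]
    calc greene w k + c.card = ∑ i, (F₁ i).card := hsum.symm
      _ ≤ greene w (k+1) := le_greene F₁ hw1 hw2
  have hu : greene (permWord σ) (k+1) ≤ greene (permWord σ) k + c.card := by
    rw [greene_eq_gS, greene_eq_gS]
    exact hcb
  have hmw := greene_mono w k
  have hmu := greene_mono (permWord σ) k
  show greene (permWord σ) (k+1) - greene (permWord σ) k ≤ greene w (k+1) - greene w k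
  omega

end assemble

end SupSeq

/-- If `w` is a supersequence of a finite set `B` of separable permutations of `[n]`
(each `σ ∈ B` occurs literally as a subsequence of `w`), then `shape(w)` contains the
union of the Ferrers diagrams of the shapes of the elements of `B`; in particular the
length of `w` is at least the number of cells of that union. -/
theorem supersequence_shape_contains_union {n : ℕ} (B : Finset (Equiv.Perm (Fin n)))
    (hB : ∀ σ ∈ B, Separable σ) (w : List ℕ) (hw : ∀ x ∈ w, 0 < x)
    (hsup : ∀ σ ∈ B, (permWord σ).Sublist w) :
    (∀ σ ∈ B, ∀ k : ℕ, shapePart (permWord σ) k ≤ shapePart w k) ∧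
      (∑ k ∈ Finset.range n, B.sup fun σ => shapePart (permWord σ) k) ≤ w.length := by
  have part1 : ∀ σ ∈ B, ∀ k : ℕ, shapePart (permWord σ) k ≤ shapePart w k :=
    fun σ hσ k => SupSeq.main_part1 σ (hB σ hσ) w (hsup σ hσ) k
  refine ⟨part1, ?_⟩
  calc ∑ k ∈ Finset.range n, B.sup (fun σ => shapePart (permWord σ) k)
      ≤ ∑ k ∈ Finset.range n, shapePart w k := by
        refine Finset.sum_le_sum ?_
        intro k _
        exact Finset.sup_le (fun σ hσ => part1 σ hσ k)
    _ ≤ greene w n := SupSeq.telescope w n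
    _ ≤ w.length := SupSeq.greene_le_length w n
end

section
/- For n ≥ 1, let μ(n) be the Ferrers diagram obtained as the union of all Ferrers diagrams of partitions of n. Then the number of corners of μ(n) (equivalently, the number of distinct nonzero row lengths of μ(n)) equals ⌊√(4n+1)⌋ − 1. -/
/-- `l` is (the list of row lengths of) a partition of `n`. -/
def IsPartitionOf (n : ℕ) (l : List ℕ) : Prop :=
  l.Pairwise (· ≥ ·) ∧ (∀ x ∈ l, 0 < x) ∧ l.sum = n

/-- The cell `(i, j)` (row `i`, column `j`, both 1-indexed) lies in `μ(n)`, the union of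
the Ferrers diagrams of all partitions of `n`. -/
def InMu (n i j : ℕ) : Prop :=
  ∃ l : List ℕ, IsPartitionOf n l ∧ j ≤ l.getD (i - 1) 0

/-- The length of row `i` (1-indexed) of `μ(n)`. -/
noncomputable def muRow (n i : ℕ) : ℕ := sSup {j | InMu n i j}

lemma inMu_iff (n i j : ℕ) (hi : 1 ≤ i) (hin : i ≤ n) : InMu n i j ↔ j ≤ n / i := by
  constructor
  · rintro ⟨l, ⟨hs, _, hsum⟩, hj⟩
    rcases Nat.eq_zero_or_pos j with rfl | hj0
    · exact Nat.zero_le _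
    -- index valid
    have hlen : i - 1 < l.length := by
      by_contra h
      rw [List.getD_eq_default _ _ (le_of_not_gt h)] at hj
      omega
    have hile : i ≤ l.length := by omega
    -- elements of take i are ≥ j
    have hget : ∀ x ∈ l.take i, j ≤ x := by
      intro x hx
      rw [List.mem_iff_getElem] at hx
      obtain ⟨k, hk, rfl⟩ := hx
      have hk' : k < i := by
        have := hk; rw [List.length_take] at this; omega
      have hkl : k < l.length := by omega
      rw [List.getElem_take]
      have hj' : j ≤ l[i-1] := by
        rwa [List.getD_eq_getElem _ _ hlen] at hj
      rcases Nat.lt_or_ge k (i-1) with hlt | hge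
      · refine le_trans hj' ?_
        have := List.pairwise_iff_get.mp hs ⟨k, hkl⟩ ⟨i-1, hlen⟩ hlt
        exact this
      · have : k = i - 1 := by omega
        subst this; exact hj'
    have hsum' : (l.take i).length • j ≤ (l.take i).sum :=
      List.card_nsmul_le_sum _ _ hget
    rw [List.length_take, min_eq_left hile, smul_eq_mul] at hsum'
    have htd : (l.take i).sum ≤ l.sum := by
      conv_rhs => rw [← List.take_append_drop i l]
      rw [List.sum_append]; omega
    rw [Nat.le_div_iff_mul_le (by omega), mul_comm]
    omega
  · intro hj
    set q := n / i with hq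
    set r := n % i with hr
    have hqpos : 1 ≤ q := Nat.one_le_div_iff (by omega) |>.mpr hin
    have hri : r < i := Nat.mod_lt _ (by omega)
    refine ⟨List.replicate r (q+1) ++ List.replicate (i - r) q, ⟨?_, ?_, ?_⟩, ?_⟩
    · rw [List.pairwise_append]
      refine ⟨?_, ?_, ?_⟩
      · rw [List.pairwise_replicate]; right; exact le_refl _
      · rw [List.pairwise_replicate]; right; exact le_refl _
      · intro a ha b hb
        rw [List.eq_of_mem_replicate ha, List.eq_of_mem_replicate hb]; omega
    · intro x hx
      rcases List.mem_append.mp hx with h | h <;>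
        rw [List.eq_of_mem_replicate h] <;> omega
    · rw [List.sum_append, List.sum_replicate, List.sum_replicate, smul_eq_mul, smul_eq_mul]
      have := Nat.div_add_mod n i
      have : i * q + r = n := by rw [hq, hr]; omega
      nlinarith [Nat.sub_add_cancel (le_of_lt hri)]
    · have hlen : (List.replicate r (q+1) ++ List.replicate (i - r) q).length = i := by
        simp; omega
      have hmem : (List.replicate r (q+1) ++ List.replicate (i - r) q)[i-1] ∈
          (List.replicate r (q+1) ++ List.replicate (i - r) q) :=
        List.getElem_mem (by omega)
      rw [List.getD_eq_getElem _ _ (by omega)]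
      rcases List.mem_append.mp hmem with h | h <;>
        rw [List.eq_of_mem_replicate h] at * <;> omega

lemma muRow_eq (n i : ℕ) (hi : 1 ≤ i) (hin : i ≤ n) : muRow n i = n / i := by
  have : {j | InMu n i j} = Set.Iic (n / i) := by
    ext j; exact inMu_iff n i j hi hin
  rw [muRow, this, csSup_Iic]

lemma div_strictAnti (n a b : ℕ) (ha : 1 ≤ a) (hab : a < b) (hb : b ≤ Nat.sqrt n) :
    n / b < n / a := by
  set s := Nat.sqrt n
  have hss : s * s ≤ n := by have := Nat.sqrt_le' n; nlinarith [sq_nonneg s]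
  obtain ⟨c, rfl⟩ : ∃ c, b = c + 1 := ⟨b - 1, by omega⟩
  have hq : c + 1 ≤ n / (c + 1) := by
    calc c + 1 ≤ s := hb
    _ ≤ n / s := (Nat.le_div_iff_mul_le (by omega)).mpr hss
    _ ≤ n / (c + 1) := Nat.div_le_div_left hb (by omega)
  have hqb : (n / (c + 1)) * (c + 1) ≤ n := Nat.div_mul_le_self n (c + 1)
  have key : n / (c + 1) + 1 ≤ n / c := by
    rw [Nat.le_div_iff_mul_le (by omega)]
    nlinarith
  calc n / (c + 1) < n / c := by omega
  _ ≤ n / a := Nat.div_le_div_left (by omega) ha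

/-- The number of corners of `μ(n)`, i.e. the number of distinct nonzero row lengths of
`μ(n)`, equals `⌊√(4n+1)⌋ - 1`. (All rows of `μ(n)` beyond row `n` are empty, so the
distinct nonzero row lengths are realized among rows `1, …, n`.) -/
theorem corners_mu_eq (n : ℕ) (hn : 1 ≤ n) :
    ((((Finset.Icc 1 n).image (muRow n)).filter fun r => 0 < r).card)
      = Nat.sqrt (4 * n + 1) - 1 := by
  set s := Nat.sqrt n with hs
  have hs1 : 1 ≤ s := by rw [hs, Nat.le_sqrt]; omega
  have hss : s * s ≤ n := by have := Nat.sqrt_le' n; nlinarith [sq_nonneg s]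
  have hlt : n < (s + 1) * (s + 1) := by have := Nat.lt_succ_sqrt' n; nlinarith [sq_nonneg (s+1)]
  have hsn : s ≤ n := Nat.sqrt_le_self n
  set m := n / (s + 1) with hm
  have hms : m ≤ s := by
    have : n / (s+1) < s + 1 := (Nat.div_lt_iff_lt_mul (by omega)).mpr hlt
    omega
  -- replace muRow by division
  have himg : (Finset.Icc 1 n).image (muRow n) = (Finset.Icc 1 n).image (fun i => n / i) := by
    apply Finset.image_congr
    intro i hi
    simp only [Finset.mem_coe, Finset.mem_Icc] at hi
    exact muRow_eq n i hi.1 hi.2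
  -- all values are positive
  have hpos : ∀ r ∈ (Finset.Icc 1 n).image (fun i => n / i), 0 < r := by
    intro r hr
    obtain ⟨i, hi, rfl⟩ := Finset.mem_image.mp hr
    rw [Finset.mem_Icc] at hi
    exact Nat.one_le_div_iff (by omega) |>.mpr hi.2
  rw [himg, Finset.filter_true_of_mem hpos]
  -- decomposition
  have hdecomp : (Finset.Icc 1 n).image (fun i => n / i) =
      (Finset.Icc 1 s).image (fun i => n / i) ∪ Finset.Icc 1 m := by
    apply Finset.Subset.antisymm
    · intro q hq
      obtain ⟨i, hi, rfl⟩ := Finset.mem_image.mp hq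
      rw [Finset.mem_Icc] at hi
      rcases le_or_gt i s with h | h
      · exact Finset.mem_union_left _ (Finset.mem_image.mpr ⟨i, Finset.mem_Icc.mpr ⟨hi.1, h⟩, rfl⟩)
      · apply Finset.mem_union_right
        rw [Finset.mem_Icc]
        refine ⟨Nat.one_le_div_iff (by omega) |>.mpr hi.2, ?_⟩
        exact Nat.div_le_div_left h (by omega)
    · intro q hq
      rcases Finset.mem_union.mp hq with h | h
      · obtain ⟨i, hi, rfl⟩ := Finset.mem_image.mp h
        rw [Finset.mem_Icc] at hi
        exact Finset.mem_image.mpr ⟨i, Finset.mem_Icc.mpr ⟨hi.1, le_trans hi.2 hsn⟩, rfl⟩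
      · rw [Finset.mem_Icc] at h
        obtain ⟨hq1, hqm⟩ := h
        have hqn : q ≤ n := by omega
        refine Finset.mem_image.mpr ⟨n / q, Finset.mem_Icc.mpr
          ⟨Nat.one_le_div_iff (by omega) |>.mpr hqn, Nat.div_le_self n q⟩, ?_⟩
        -- n / (n / q) = q
        have hqs : q ≤ s := le_trans hqm hms
        have hnq : s ≤ n / q := by
          calc s ≤ n / s := (Nat.le_div_iff_mul_le (by omega)).mpr hss
          _ ≤ n / q := Nat.div_le_div_left hqs (by omega)
        have h1 : q ≤ n / (n / q) := by
          rw [Nat.le_div_iff_mul_le (by omega)]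
          rw [mul_comm]
          exact Nat.div_mul_le_self n q
        have h2 : n / (n / q) < q + 1 := by
          rw [Nat.div_lt_iff_lt_mul (by omega)]
          have hmod : n % q < q := Nat.mod_lt _ (by omega)
          have hdm : q * (n / q) + n % q = n := Nat.div_add_mod n q
          nlinarith
        omega
  rw [hdecomp]
  -- disjointness
  have hdisj : Disjoint ((Finset.Icc 1 s).image (fun i => n / i)) (Finset.Icc 1 m) := by
    rw [Finset.disjoint_left]
    intro q hq hq2
    obtain ⟨i, hi, rfl⟩ := Finset.mem_image.mp hq
    rw [Finset.mem_Icc] at hi hq2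
    have : n / s ≤ n / i := Nat.div_le_div_left hi.2 hi.1
    rcases Nat.lt_or_ge n (s * s + s) with hc | hc
    · have h1 : s ≤ n / s := (Nat.le_div_iff_mul_le (by omega)).mpr hss
      have h2 : m < s := by
        have : n / (s+1) < s := (Nat.div_lt_iff_lt_mul (by omega)).mpr (by nlinarith)
        omega
      omega
    · have h1 : s + 1 ≤ n / s := (Nat.le_div_iff_mul_le (by omega)).mpr (by nlinarith)
      omega
  rw [Finset.card_union_of_disjoint hdisj]
  -- cards
  have hcard1 : ((Finset.Icc 1 s).image (fun i => n / i)).card = s := by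
    rw [Finset.card_image_of_injOn, Nat.card_Icc]
    · omega
    · intro a ha b hb hab
      have hab' : n / a = n / b := hab
      simp only [Finset.coe_Icc, Set.mem_Icc] at ha hb
      by_contra hne
      rcases Nat.lt_or_ge a b with h | h
      · have := div_strictAnti n a b ha.1 h hb.2; omega
      · have := div_strictAnti n b a hb.1 (by omega) ha.2; omega
  rw [hcard1, Nat.card_Icc]
  -- final arithmetic
  rcases Nat.lt_or_ge n (s * s + s) with hc | hc
  · have hm1 : m = s - 1 := by
      have hle : m < s := by
        have : n / (s+1) < s := (Nat.div_lt_iff_lt_mul (by omega)).mpr (by nlinarith)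
        omega
      have hge : s - 1 ≤ m := by
        rw [hm, Nat.le_div_iff_mul_le (by omega)]
        nlinarith [Nat.sub_add_cancel hs1]
      omega
    have hsq : Nat.sqrt (4 * n + 1) = 2 * s := by
      apply le_antisymm
      · have : Nat.sqrt (4 * n + 1) < 2 * s + 1 := by
          rw [Nat.sqrt_lt]; nlinarith
        omega
      · rw [Nat.le_sqrt]; nlinarith
    rw [hsq, hm1]; omega
  · have hm1 : m = s := by
      have hge : s ≤ m := by
        rw [hm, Nat.le_div_iff_mul_le (by omega)]; nlinarith
      omega
    have hsq : Nat.sqrt (4 * n + 1) = 2 * s + 1 := by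
      apply le_antisymm
      · have : Nat.sqrt (4 * n + 1) < 2 * s + 2 := by
          rw [Nat.sqrt_lt]; nlinarith
        omega
      · rw [Nat.le_sqrt]; nlinarith
    rw [hsq, hm1]; omega
end
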